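/- arXiv:2112.03129 — 7 statements merged into one kernel-verified Lean document; each statement's English description precedes it below -/
import Mathlib

section
/- Let k, n ≥ 1, let ρ be a positive definite density matrix on M_k(ℂ)⊗M_n(ℂ) ≅ M_{kn}(ℂ), and let σ ∈ M_n(ℂ) be the (necessarily positive definite) density matrix determined by tr(σB) = tr(ρ(1_k⊗B)) for all B ∈ M_n(ℂ). Then the following are equivalent: (a) there exists a positive definite density matrix τ ∈ M_k(ℂ) such that ρ = τ⊗σ; (b) for every t ∈ ℝ and every A ∈ M_n(ℂ) there exists B ∈ M_n(ℂ) with ρ^{it}(1_k⊗A)ρ^{-it} = 1_k⊗B (i.e., the modular group Ad(ρ^{it}) leaves the subalgebra 1_k⊗M_n(ℂ) invariant). -/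
open Matrix Kronecker ComplexOrder

namespace Stmt0Aux

section PtrLemmas

variable {k n : ℕ}

noncomputable def ptr (X : Matrix (Fin k × Fin n) (Fin k × Fin n) ℂ) : Matrix (Fin n) (Fin n) ℂ :=
  Matrix.of fun i j => ∑ a : Fin k, X (a, i) (a, j)

lemma ptr_apply (X : Matrix (Fin k × Fin n) (Fin k × Fin n) ℂ) (i j : Fin n) :
    ptr X i j = ∑ a : Fin k, X (a, i) (a, j) := rfl

lemma trace_ptr (X : Matrix (Fin k × Fin n) (Fin k × Fin n) ℂ) : (ptr X).trace = X.trace := by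
  simp only [Matrix.trace, ptr, Matrix.diag, Matrix.of_apply, Fintype.sum_prod_type]
  rw [Finset.sum_comm]

lemma ptr_one_kron (B : Matrix (Fin n) (Fin n) ℂ) :
    ptr ((1 : Matrix (Fin k) (Fin k) ℂ) ⊗ₖ B) = (k : ℂ) • B := by
  ext i j
  simp [ptr, Matrix.kroneckerMap_apply, Matrix.one_apply]

lemma ptr_sub (X Y : Matrix (Fin k × Fin n) (Fin k × Fin n) ℂ) :
    ptr (X - Y) = ptr X - ptr Y := by
  ext i j
  simp [ptr_apply, Finset.sum_sub_distrib]

lemma ptr_mul_kron (X : Matrix (Fin k × Fin n) (Fin k × Fin n) ℂ) (B : Matrix (Fin n) (Fin n) ℂ) :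
    ptr (X * ((1 : Matrix (Fin k) (Fin k) ℂ) ⊗ₖ B)) = ptr X * B := by
  ext i j
  simp only [ptr_apply, Matrix.mul_apply, Matrix.of_apply, Fintype.sum_prod_type,
    Matrix.kroneckerMap_apply, Matrix.one_apply, ite_mul, one_mul, zero_mul, mul_ite, mul_zero]
  calc (∑ x : Fin k, ∑ x1 : Fin k, ∑ x2 : Fin n, if x1 = x then X (x, i) (x1, x2) * B x2 j else 0)
      = ∑ x : Fin k, ∑ x2 : Fin n, X (x, i) (x, x2) * B x2 j := by
        refine Finset.sum_congr rfl fun x _ => ?_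
        rw [Finset.sum_comm]
        simp
    _ = ∑ x : Fin n, (∑ a : Fin k, X (a, i) (a, x)) * B x j := by
        rw [Finset.sum_comm]
        simp [Finset.sum_mul]

lemma ptr_kron_mul (X : Matrix (Fin k × Fin n) (Fin k × Fin n) ℂ) (B : Matrix (Fin n) (Fin n) ℂ) :
    ptr (((1 : Matrix (Fin k) (Fin k) ℂ) ⊗ₖ B) * X) = B * ptr X := by
  ext i j
  simp only [ptr_apply, Matrix.mul_apply, Matrix.of_apply, Fintype.sum_prod_type,
    Matrix.kroneckerMap_apply, Matrix.one_apply, ite_mul, one_mul, zero_mul, mul_ite, mul_zero]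
  calc (∑ x : Fin k, ∑ x1 : Fin k, ∑ x2 : Fin n, if x = x1 then B i x2 * X (x1, x2) (x, j) else 0)
      = ∑ x : Fin k, ∑ x2 : Fin n, B i x2 * X (x, x2) (x, j) := by
        refine Finset.sum_congr rfl fun x _ => ?_
        rw [Finset.sum_comm]
        simp
    _ = ∑ x : Fin n, B i x * ∑ a : Fin k, X (a, x) (a, j) := by
        rw [Finset.sum_comm]
        simp [Finset.mul_sum]

lemma ptr_kron (P : Matrix (Fin k) (Fin k) ℂ) (Q : Matrix (Fin n) (Fin n) ℂ) :
    ptr (P ⊗ₖ Q) = P.trace • Q := by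
  ext i j
  simp [ptr, Matrix.trace, Matrix.diag, Finset.sum_mul]

lemma ptr_isHermitian {X : Matrix (Fin k × Fin n) (Fin k × Fin n) ℂ} (h : X.IsHermitian) :
    (ptr X).IsHermitian := by
  ext i j
  simp only [Matrix.conjTranspose_apply, ptr_apply, star_sum]
  exact Finset.sum_congr rfl fun a _ => congrFun (congrFun h (a, i)) (a, j)

lemma ptr_posDef (hk : 1 ≤ k) {X : Matrix (Fin k × Fin n) (Fin k × Fin n) ℂ} (h : X.PosDef) :
    (ptr X).PosDef := by
  haveI : Nonempty (Fin k) := ⟨⟨0, hk⟩⟩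
  refine Matrix.posDef_iff_dotProduct_mulVec.mpr ⟨ptr_isHermitian h.1, fun x hx => ?_⟩
  have hyne : ∀ a : Fin k, (fun p : Fin k × Fin n => if p.1 = a then x p.2 else 0) ≠ 0 := by
    intro a hz
    apply hx; funext i
    simpa using congr_fun hz (a, i)
  have key : dotProduct (star x) (ptr X *ᵥ x)
      = ∑ a : Fin k, dotProduct (star fun p : Fin k × Fin n => if p.1 = a then x p.2 else 0)
          (X *ᵥ fun p : Fin k × Fin n => if p.1 = a then x p.2 else 0) := by
    simp only [dotProduct, Matrix.mulVec, ptr_apply, Pi.star_apply, apply_ite (star ·), star_zero,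
      Fintype.sum_prod_type, ite_mul, zero_mul, mul_ite, mul_zero, Finset.sum_ite_eq',
      Finset.sum_ite_eq, Finset.mul_sum, Finset.sum_mul]
    simp only [Finset.sum_ite_irrel, Finset.sum_const_zero, Finset.sum_ite_eq, Finset.sum_ite_eq',
      Finset.mem_univ, if_true]
    calc (∑ x1 : Fin n, ∑ x2 : Fin n, ∑ i : Fin k, star (x x1) * (X (i,x1) (i,x2) * x x2))
        = ∑ x1 : Fin n, ∑ i : Fin k, ∑ x2 : Fin n, star (x x1) * (X (i,x1) (i,x2) * x x2) :=
          Finset.sum_congr rfl fun a _ => Finset.sum_comm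
      _ = ∑ i : Fin k, ∑ x1 : Fin n, ∑ x2 : Fin n, star (x x1) * (X (i,x1) (i,x2) * x x2) :=
          Finset.sum_comm
  rw [key]
  exact Finset.sum_pos (fun a _ => h.dotProduct_mulVec_pos (hyne a)) Finset.univ_nonempty

lemma mul_onekron_std_apply (X : Matrix (Fin k × Fin n) (Fin k × Fin n) ℂ) (p q : Fin n)
    (a b : Fin k) (i j : Fin n) :
    (X * ((1 : Matrix (Fin k) (Fin k) ℂ) ⊗ₖ Matrix.single p q (1 : ℂ))) (a, i) (b, j)
      = if q = j then X (a, i) (b, p) else 0 := by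
  simp [Matrix.mul_apply, Fintype.sum_prod_type, Matrix.kroneckerMap_apply, Matrix.one_apply,
    Matrix.single, Matrix.of_apply, ite_and, mul_ite, mul_one, mul_zero, ite_mul, zero_mul,
    Finset.sum_ite_eq, Finset.sum_ite_eq']

lemma onekron_std_mul_apply (X : Matrix (Fin k × Fin n) (Fin k × Fin n) ℂ) (p q : Fin n)
    (a b : Fin k) (i j : Fin n) :
    (((1 : Matrix (Fin k) (Fin k) ℂ) ⊗ₖ Matrix.single p q (1 : ℂ)) * X) (a, i) (b, j)
      = if p = i then X (a, q) (b, j) else 0 := by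
  simp [Matrix.mul_apply, Fintype.sum_prod_type, Matrix.kroneckerMap_apply, Matrix.one_apply,
    Matrix.single, Matrix.of_apply, ite_and, mul_ite, mul_one, mul_zero, ite_mul, zero_mul,
    Finset.sum_ite_eq, Finset.sum_ite_eq']

lemma trace_mul_std (M : Matrix (Fin n) (Fin n) ℂ) (i j : Fin n) :
    (M * Matrix.single i j (1 : ℂ)).trace = M j i := by
  simp [Matrix.trace, Matrix.diag, Matrix.mul_apply, Matrix.single, Matrix.of_apply,
    ite_and, mul_ite, mul_one, mul_zero, Finset.sum_ite_eq, Finset.sum_ite_eq']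

lemma kron_conjTranspose {k' n' : Type*} (P : Matrix k' k' ℂ) (Q : Matrix n' n' ℂ) :
    (P ⊗ₖ Q)ᴴ = Pᴴ ⊗ₖ Qᴴ := by
  ext ⟨a, i⟩ ⟨b, j⟩
  simp [Matrix.conjTranspose_apply, Matrix.kroneckerMap_apply]

lemma one_kron_sub (P Q : Matrix (Fin n) (Fin n) ℂ) :
    (1 : Matrix (Fin k) (Fin k) ℂ) ⊗ₖ (P - Q)
      = (1 : Matrix (Fin k) (Fin k) ℂ) ⊗ₖ P - (1 : Matrix (Fin k) (Fin k) ℂ) ⊗ₖ Q := by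
  ext ⟨a, i⟩ ⟨b, j⟩
  simp [Matrix.kroneckerMap_apply, mul_sub]

noncomputable def ptrL (k n : ℕ) : Matrix (Fin k × Fin n) (Fin k × Fin n) ℂ →ₗ[ℝ]
    Matrix (Fin k × Fin n) (Fin k × Fin n) ℂ where
  toFun X := ((k : ℂ))⁻¹ • ((1 : Matrix (Fin k) (Fin k) ℂ) ⊗ₖ ptr X)
  map_add' X Y := by
    ext ⟨a, i⟩ ⟨b, j⟩
    simp [ptr_apply, Matrix.kroneckerMap_apply, Finset.sum_add_distrib, mul_add, smul_add]
  map_smul' r X := by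
    ext ⟨a, i⟩ ⟨b, j⟩
    simp only [ptr_apply, Matrix.smul_apply, Matrix.kroneckerMap_apply, RingHom.id_apply,
      Matrix.of_apply, smul_eq_mul, Complex.real_smul, Finset.mul_sum]
    exact Finset.sum_congr rfl fun c _ => by ring

end PtrLemmas

section Normed


variable {m : Type*} [Fintype m] [DecidableEq m]

lemma cfc_log_exp {M : Matrix m m ℂ} (hM : M.IsHermitian) :
    cfc Real.log (NormedSpace.exp M) = M := by
  open scoped Matrix.Norms.L2Operator in
  exact CFC.log_exp M hM.isSelfAdjoint

lemma exp_cfc_log {M : Matrix m m ℂ} (hM : M.PosDef) :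
    NormedSpace.exp (cfc Real.log M) = M := by
  open scoped Matrix.Norms.L2Operator MatrixOrder in
  exact CFC.exp_log M (isStrictlyPositive_iff_posDef.mpr hM)

lemma exp_hermitian_posDef {M : Matrix m m ℂ} (hM : M.IsHermitian) :
    (NormedSpace.exp M).PosDef := by
  set N := NormedSpace.exp ((1/2 : ℂ) • M) with hN
  have hNH : Nᴴ = N := by
    rw [hN, ← Matrix.exp_conjTranspose, Matrix.conjTranspose_smul, hM.eq]
    norm_num
  have hN2 : Nᴴ * N = NormedSpace.exp M := by
    rw [hNH, hN, ← Matrix.exp_add_of_commute _ _ (Commute.refl _)]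
    rw [← add_smul]
    norm_num
  have hEN : NormedSpace.exp (-((1/2 : ℂ) • M)) * N = 1 := by
    rw [hN, ← Matrix.exp_add_of_commute _ _ (Commute.refl ((1/2 : ℂ) • M)).neg_left, neg_add_cancel,
      NormedSpace.exp_zero]
  refine Matrix.PosDef.of_dotProduct_mulVec_pos ?_ fun x hx => ?_
  · rw [← hN2]; exact Matrix.isHermitian_conjTranspose_mul_self N
  · rw [← hN2, ← Matrix.mulVec_mulVec, Matrix.dotProduct_mulVec, Matrix.vecMul_conjTranspose,
      star_star]
    refine Matrix.dotProduct_star_self_pos_iff.mpr fun hy => hx ?_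
    have hinv : NormedSpace.exp (-((1/2 : ℂ) • M)) *ᵥ (N *ᵥ x) = x := by
      rw [Matrix.mulVec_mulVec, hEN, Matrix.one_mulVec]
    rw [← hinv, hy, Matrix.mulVec_zero]

lemma posDef_trace_pos [Nonempty m] {P : Matrix m m ℂ} (hP : P.PosDef) : 0 < P.trace := by
  have h : ∀ a : m, 0 < P a a := by
    intro a
    have h1 := hP.dotProduct_mulVec_pos (x := Pi.single a 1) (by
      intro h
      simpa using congr_fun h a)
    simpa [dotProduct, Matrix.mulVec, Pi.single_apply, mul_ite, ite_mul] using h1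
  exact Finset.sum_pos (fun a _ => h a) Finset.univ_nonempty

lemma exp_smul_mul_exp_neg_smul (z : ℂ) (X : Matrix m m ℂ) :
    NormedSpace.exp (z • X) * NormedSpace.exp ((-z) • X) = 1 := by
  rw [← Matrix.exp_add_of_commute _ _ (((Commute.refl X).smul_left z).smul_right (-z))]
  rw [← add_smul, add_neg_cancel, zero_smul, NormedSpace.exp_zero]

lemma deriv_conj_exp (M C : Matrix m m ℂ) :
    HasDerivAt
      (fun t : ℝ => NormedSpace.exp (t • M) * C * NormedSpace.exp (t • (-M)))
      (M * C - C * M) 0 := by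
  have h1 : HasDerivAt (fun t : ℝ => NormedSpace.exp (t • M)) M 0 := by
    have h : HasDerivAt (fun u : ℝ => NormedSpace.exp (u • M)) (NormedSpace.exp ((0:ℝ) • M) * M) 0 := by
      open scoped Matrix.Norms.Operator in
      exact hasDerivAt_exp_smul_const (𝕂 := ℝ) M (0 : ℝ)
    simpa using h
  have h2 : HasDerivAt (fun t : ℝ => NormedSpace.exp (t • (-M))) (-M) 0 := by
    have h : HasDerivAt (fun u : ℝ => NormedSpace.exp (u • (-M))) (NormedSpace.exp ((0:ℝ) • (-M)) * (-M)) 0 := by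
      open scoped Matrix.Norms.Operator in
      exact hasDerivAt_exp_smul_const (𝕂 := ℝ) (-M) (0 : ℝ)
    simpa using h
  have h3 : HasDerivAt (fun t : ℝ => NormedSpace.exp (t • M) * C * NormedSpace.exp (t • (-M)))
      (M * C * NormedSpace.exp ((0:ℝ) • (-M)) + NormedSpace.exp ((0:ℝ) • M) * C * (-M)) 0 := by
    open scoped Matrix.Norms.Operator in
    exact (h1.mul_const C).mul h2
  simp only [zero_smul, NormedSpace.exp_zero, mul_one, one_mul] at h3
  convert h3 using 1
  simp [mul_neg, sub_eq_add_neg]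

variable (k n : ℕ)

/-- `B ↦ 1 ⊗ₖ B` as an algebra hom. -/
noncomputable def rkron : Matrix (Fin n) (Fin n) ℂ →ₐ[ℂ] Matrix (Fin k × Fin n) (Fin k × Fin n) ℂ where
  toFun B := (1 : Matrix (Fin k) (Fin k) ℂ) ⊗ₖ B
  map_one' := Matrix.one_kronecker_one
  map_mul' A B := by rw [← Matrix.mul_kronecker_mul, one_mul]
  map_zero' := by ext ⟨a, i⟩ ⟨b, j⟩; simp [Matrix.kroneckerMap_apply]
  map_add' A B := by ext ⟨a, i⟩ ⟨b, j⟩; simp [Matrix.kroneckerMap_apply, mul_add]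
  commutes' c := by
    simp only [Algebra.algebraMap_eq_smul_one, Matrix.kronecker_smul, Matrix.one_kronecker_one]

/-- `P ↦ P ⊗ₖ 1` as an algebra hom. -/
noncomputable def lkron : Matrix (Fin k) (Fin k) ℂ →ₐ[ℂ] Matrix (Fin k × Fin n) (Fin k × Fin n) ℂ where
  toFun P := P ⊗ₖ (1 : Matrix (Fin n) (Fin n) ℂ)
  map_one' := Matrix.one_kronecker_one
  map_mul' A B := by rw [← Matrix.mul_kronecker_mul, one_mul]
  map_zero' := by ext ⟨a, i⟩ ⟨b, j⟩; simp [Matrix.kroneckerMap_apply]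
  map_add' A B := by ext ⟨a, i⟩ ⟨b, j⟩; simp [Matrix.kroneckerMap_apply, add_mul]
  commutes' c := by
    simp only [Algebra.algebraMap_eq_smul_one, Matrix.smul_kronecker, Matrix.one_kronecker_one]

lemma exp_rkron (B : Matrix (Fin n) (Fin n) ℂ) :
    NormedSpace.exp ((1 : Matrix (Fin k) (Fin k) ℂ) ⊗ₖ B) =
      (1 : Matrix (Fin k) (Fin k) ℂ) ⊗ₖ NormedSpace.exp B :=
  open scoped Matrix.Norms.Operator in
  (NormedSpace.map_exp (rkron k n) ((rkron k n).toLinearMap.continuous_of_finiteDimensional)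
    B).symm

lemma exp_lkron (P : Matrix (Fin k) (Fin k) ℂ) :
    NormedSpace.exp (P ⊗ₖ (1 : Matrix (Fin n) (Fin n) ℂ)) =
      NormedSpace.exp P ⊗ₖ (1 : Matrix (Fin n) (Fin n) ℂ) :=
  open scoped Matrix.Norms.Operator in
  (NormedSpace.map_exp (lkron k n) ((lkron k n).toLinearMap.continuous_of_finiteDimensional)
    P).symm

lemma exp_kron_sum (P : Matrix (Fin k) (Fin k) ℂ) (Q : Matrix (Fin n) (Fin n) ℂ) :
    NormedSpace.exp (P ⊗ₖ (1 : Matrix (Fin n) (Fin n) ℂ) +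
        (1 : Matrix (Fin k) (Fin k) ℂ) ⊗ₖ Q) =
      NormedSpace.exp P ⊗ₖ NormedSpace.exp Q := by
  have hc : Commute (P ⊗ₖ (1 : Matrix (Fin n) (Fin n) ℂ))
      ((1 : Matrix (Fin k) (Fin k) ℂ) ⊗ₖ Q) := by
    show _ * _ = _ * _
    rw [← Matrix.mul_kronecker_mul, ← Matrix.mul_kronecker_mul, one_mul, mul_one, one_mul, mul_one]
  rw [Matrix.exp_add_of_commute _ _ hc, exp_lkron, exp_rkron, ← Matrix.mul_kronecker_mul,
    mul_one, one_mul]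

/-- The main statement, proved in the normed context. -/
theorem main (k n : ℕ) (hk : 1 ≤ k) (hn : 1 ≤ n)
    (ρ : Matrix (Fin k × Fin n) (Fin k × Fin n) ℂ)
    (hρ : ρ.PosDef) (hρtr : ρ.trace = 1)
    (σ : Matrix (Fin n) (Fin n) ℂ)
    (hσ : ∀ B : Matrix (Fin n) (Fin n) ℂ,
      (σ * B).trace = (ρ * ((1 : Matrix (Fin k) (Fin k) ℂ) ⊗ₖ B)).trace) :
    (∃ τ : Matrix (Fin k) (Fin k) ℂ, τ.PosDef ∧ τ.trace = 1 ∧ ρ = τ ⊗ₖ σ) ↔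
      (∀ (t : ℝ) (A : Matrix (Fin n) (Fin n) ℂ), ∃ B : Matrix (Fin n) (Fin n) ℂ,
        NormedSpace.exp ((Complex.I * (t : ℂ)) • (hρ.isHermitian.cfc Real.log)) *
            ((1 : Matrix (Fin k) (Fin k) ℂ) ⊗ₖ A) *
          NormedSpace.exp ((-(Complex.I * (t : ℂ))) • (hρ.isHermitian.cfc Real.log)) =
        (1 : Matrix (Fin k) (Fin k) ℂ) ⊗ₖ B) := by
  haveI : Nonempty (Fin k) := ⟨⟨0, hk⟩⟩
  have hkne : (k : ℂ) ≠ 0 := Nat.cast_ne_zero.mpr (by omega)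
  have hσp : σ = ptr ρ := by
    ext i j
    have h1 := hσ (Matrix.single j i (1 : ℂ))
    rw [trace_mul_std, ← trace_ptr, ptr_mul_kron, trace_mul_std] at h1
    exact h1
  have hHcfc : hρ.isHermitian.cfc Real.log = cfc Real.log ρ :=
    (hρ.isHermitian.cfc_eq Real.log).symm
  set H := hρ.isHermitian.cfc Real.log with hHdef
  have hHsa : IsSelfAdjoint H := by
    rw [hHcfc]
    exact cfc_predicate Real.log ρ
  have hHherm : H.IsHermitian := hHsa
  have hexpH : NormedSpace.exp H = ρ := by
    rw [hHcfc]
    exact exp_cfc_log hρ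
  constructor
  · rintro ⟨τ, hτpd, hτtr, rfl⟩
    intro t A
    have hσpd : σ.PosDef := by rw [hσp]; exact ptr_posDef hk hρ
    set Lτ := cfc Real.log τ with hLτ
    set Lσ := cfc Real.log σ with hLσ
    have hLτsa : IsSelfAdjoint Lτ := cfc_predicate Real.log τ
    have hLσsa : IsSelfAdjoint Lσ := cfc_predicate Real.log σ
    have hLτherm : Lτ.IsHermitian := hLτsa
    have hLσherm : Lσ.IsHermitian := hLσsa
    have hKherm : (Lτ ⊗ₖ (1 : Matrix (Fin n) (Fin n) ℂ) +
        (1 : Matrix (Fin k) (Fin k) ℂ) ⊗ₖ Lσ).IsHermitian := by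
      show _ᴴ = _
      rw [Matrix.conjTranspose_add, kron_conjTranspose, kron_conjTranspose, hLτherm.eq,
        hLσherm.eq, Matrix.conjTranspose_one, Matrix.conjTranspose_one]
    have hexpK : NormedSpace.exp (Lτ ⊗ₖ (1 : Matrix (Fin n) (Fin n) ℂ) +
        (1 : Matrix (Fin k) (Fin k) ℂ) ⊗ₖ Lσ) = τ ⊗ₖ σ := by
      rw [exp_kron_sum, hLτ, hLσ, exp_cfc_log hτpd, exp_cfc_log hσpd]
    have hHeq : H = Lτ ⊗ₖ (1 : Matrix (Fin n) (Fin n) ℂ) +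
        (1 : Matrix (Fin k) (Fin k) ℂ) ⊗ₖ Lσ := by
      rw [hHcfc, ← hexpK, cfc_log_exp hKherm]
    have hsplit : ∀ z : ℂ, NormedSpace.exp (z • H)
        = NormedSpace.exp (z • Lτ) ⊗ₖ NormedSpace.exp (z • Lσ) := by
      intro z
      rw [hHeq, smul_add, ← Matrix.smul_kronecker, ← Matrix.kronecker_smul, exp_kron_sum]
    refine ⟨NormedSpace.exp ((Complex.I * (t : ℂ)) • Lσ) * A *
      NormedSpace.exp ((-(Complex.I * (t : ℂ))) • Lσ), ?_⟩
    rw [hsplit (Complex.I * (t : ℂ)), hsplit (-(Complex.I * (t : ℂ))),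
      ← Matrix.mul_kronecker_mul, ← Matrix.mul_kronecker_mul]
    rw [mul_one, exp_smul_mul_exp_neg_smul (Complex.I * (t : ℂ)) Lτ]
  · intro hmod
    set Cc := ((k : ℂ))⁻¹ • ptr H with hCc
    have key : ∀ A : Matrix (Fin n) (Fin n) ℂ,
        H * ((1 : Matrix (Fin k) (Fin k) ℂ) ⊗ₖ A) - ((1 : Matrix (Fin k) (Fin k) ℂ) ⊗ₖ A) * H
          = (1 : Matrix (Fin k) (Fin k) ℂ) ⊗ₖ (Cc * A - A * Cc) := by
      intro A
      set M := Complex.I • H with hM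
      set CA := (1 : Matrix (Fin k) (Fin k) ℂ) ⊗ₖ A with hCA
      have hfun : ∀ t : ℝ, t • M = (Complex.I * (t : ℂ)) • H := by
        intro t
        rw [hM, mul_smul, ← Complex.coe_algebraMap, algebraMap_smul, smul_comm]
      have hfun2 : ∀ t : ℝ, t • (-M) = (-(Complex.I * (t : ℂ))) • H := by
        intro t
        rw [smul_neg, hfun t, ← neg_smul]
      have hflat : ∀ t : ℝ, ∃ B, NormedSpace.exp (t • M) * CA * NormedSpace.exp (t • (-M))
          = (1 : Matrix (Fin k) (Fin k) ℂ) ⊗ₖ B := by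
        intro t
        obtain ⟨B, hB⟩ := hmod t A
        refine ⟨B, ?_⟩
        rw [hfun t, hfun2 t]
        exact hB
      have hf := deriv_conj_exp M CA
      have hLf : HasDerivAt
          (fun t : ℝ => ptrL k n (NormedSpace.exp (t • M) * CA * NormedSpace.exp (t • (-M))))
          (ptrL k n (M * CA - CA * M)) 0 :=
        by open scoped Matrix.Norms.Operator in
          exact ((ptrL k n).toContinuousLinearMap.hasFDerivAt.comp_hasDerivAt (0 : ℝ) hf)
      have hd : HasDerivAt (fun t : ℝ => NormedSpace.exp (t • M) * CA * NormedSpace.exp (t • (-M))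
          - ptrL k n (NormedSpace.exp (t • M) * CA * NormedSpace.exp (t • (-M))))
          (M * CA - CA * M - ptrL k n (M * CA - CA * M)) 0 := by
        open scoped Matrix.Norms.Operator in
        exact hf.sub hLf
      have hgconst : (fun t : ℝ => NormedSpace.exp (t • M) * CA * NormedSpace.exp (t • (-M))
          - ptrL k n (NormedSpace.exp (t • M) * CA * NormedSpace.exp (t • (-M))))
          = fun _ => 0 := by
        funext t
        obtain ⟨B, hB⟩ := hflat t
        rw [hB]
        show (1 : Matrix (Fin k) (Fin k) ℂ) ⊗ₖ B
          - ((k : ℂ))⁻¹ • ((1 : Matrix (Fin k) (Fin k) ℂ) ⊗ₖ ptr ((1 : _) ⊗ₖ B)) = 0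
        rw [ptr_one_kron, Matrix.kronecker_smul, smul_smul, inv_mul_cancel₀ hkne, one_smul,
          sub_self]
      rw [hgconst] at hd
      have hzero : (0 : Matrix (Fin k × Fin n) (Fin k × Fin n) ℂ)
          = M * CA - CA * M - ptrL k n (M * CA - CA * M) := by
        open scoped Matrix.Norms.Operator in
        exact (hasDerivAt_const (0 : ℝ)
          (0 : Matrix (Fin k × Fin n) (Fin k × Fin n) ℂ)).unique hd
      have heq : M * CA - CA * M
          = ((k : ℂ))⁻¹ • ((1 : Matrix (Fin k) (Fin k) ℂ) ⊗ₖ ptr (M * CA - CA * M)) := by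
        have h0 : M * CA - CA * M - ptrL k n (M * CA - CA * M) = 0 := hzero.symm
        have := sub_eq_zero.mp h0
        exact this
      have hIcomm : M * CA - CA * M = Complex.I • (H * CA - CA * H) := by
        rw [hM, smul_sub, smul_mul_assoc, mul_smul_comm]
      have hHcomm : H * CA - CA * H
          = (1 : Matrix (Fin k) (Fin k) ℂ) ⊗ₖ
            ((-Complex.I * (k : ℂ)⁻¹) • ptr (M * CA - CA * M)) := by
        have h1 : H * CA - CA * H = (-Complex.I) • (M * CA - CA * M) := by
          rw [hIcomm, smul_smul]
          norm_num [Complex.I_mul_I]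
        rw [h1]
        conv_lhs => rw [heq]
        rw [smul_smul, ← Matrix.kronecker_smul]
      -- now apply ptr to identify the matrix
      have hptr := congrArg ptr hHcomm
      rw [ptr_sub, ptr_mul_kron, ptr_kron_mul, ptr_one_kron] at hptr
      -- hptr : ptr H * A - A * ptr H = k • ((-I * k⁻¹) • ptr (M*CA - CA*M))
      have hBval : (-Complex.I * (k : ℂ)⁻¹) • ptr (M * CA - CA * M) = Cc * A - A * Cc := by
        conv_rhs => rw [hCc, Matrix.smul_mul, Matrix.mul_smul, ← smul_sub, hptr]
        rw [smul_smul, inv_mul_cancel₀ hkne, one_smul]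
      rw [hHcomm, hBval]
    -- commutant step
    set X := H - (1 : Matrix (Fin k) (Fin k) ℂ) ⊗ₖ Cc with hX
    have hXcomm : ∀ A : Matrix (Fin n) (Fin n) ℂ,
        X * ((1 : Matrix (Fin k) (Fin k) ℂ) ⊗ₖ A) = ((1 : Matrix (Fin k) (Fin k) ℂ) ⊗ₖ A) * X := by
      intro A
      have h1 := key A
      have h2 : ((1 : Matrix (Fin k) (Fin k) ℂ) ⊗ₖ Cc) * ((1 : Matrix (Fin k) (Fin k) ℂ) ⊗ₖ A)
          - ((1 : Matrix (Fin k) (Fin k) ℂ) ⊗ₖ A) * ((1 : Matrix (Fin k) (Fin k) ℂ) ⊗ₖ Cc)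
          = (1 : Matrix (Fin k) (Fin k) ℂ) ⊗ₖ (Cc * A - A * Cc) := by
        rw [← Matrix.mul_kronecker_mul, ← Matrix.mul_kronecker_mul, one_mul, one_kron_sub]
      have h3 : X * ((1 : Matrix (Fin k) (Fin k) ℂ) ⊗ₖ A)
          - ((1 : Matrix (Fin k) (Fin k) ℂ) ⊗ₖ A) * X
          = (H * ((1 : Matrix (Fin k) (Fin k) ℂ) ⊗ₖ A)
              - ((1 : Matrix (Fin k) (Fin k) ℂ) ⊗ₖ A) * H)
            - (((1 : Matrix (Fin k) (Fin k) ℂ) ⊗ₖ Cc) * ((1 : Matrix (Fin k) (Fin k) ℂ) ⊗ₖ A)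
              - ((1 : Matrix (Fin k) (Fin k) ℂ) ⊗ₖ A) * ((1 : Matrix (Fin k) (Fin k) ℂ) ⊗ₖ Cc)) := by
        rw [hX]
        noncomm_ring
      rw [h1, h2, sub_self] at h3
      exact sub_eq_zero.mp h3
    have hfact : ∀ (p q i j : Fin n) (a b : Fin k),
        (if q = j then X (a, i) (b, p) else 0) = (if p = i then X (a, q) (b, j) else 0) := by
      intro p q i j a b
      have h := congr_fun (congr_fun (hXcomm (Matrix.single p q 1)) (a, i)) (b, j)
      rw [mul_onekron_std_apply, onekron_std_mul_apply] at h
      exact h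
    have i0 : Fin n := ⟨0, hn⟩
    set D := Matrix.of (fun a b : Fin k => X (a, i0) (b, i0)) with hD
    have hXD : X = D ⊗ₖ (1 : Matrix (Fin n) (Fin n) ℂ) := by
      ext ⟨a, i⟩ ⟨b, j⟩
      rw [Matrix.kroneckerMap_apply]
      by_cases hij : i = j
      · subst hij
        have h := hfact i i0 i i0 a b
        simp only [if_true] at h
        simp [hD, Matrix.one_apply, h]
      · have h := hfact j i0 i i0 a b
        rw [if_neg (Ne.symm hij)] at h
        simp only [Matrix.one_apply, if_neg hij, mul_zero]
        simpa using h
    have hHsplit : H = D ⊗ₖ (1 : Matrix (Fin n) (Fin n) ℂ)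
        + (1 : Matrix (Fin k) (Fin k) ℂ) ⊗ₖ Cc := by
      rw [← hXD, hX, sub_add_cancel]
    have hCcherm : Cc.IsHermitian := by
      show Ccᴴ = Cc
      rw [hCc, Matrix.conjTranspose_smul, (ptr_isHermitian hHherm).eq]
      congr 1
      simp
    have hXherm : X.IsHermitian := by
      show Xᴴ = X
      rw [hX, Matrix.conjTranspose_sub, kron_conjTranspose, Matrix.conjTranspose_one,
        hCcherm.eq, hHherm.eq]
    have hDherm : D.IsHermitian := by
      ext a b
      rw [Matrix.conjTranspose_apply]
      show star (D b a) = D a b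
      rw [hD]
      show star (X (b, i0) (a, i0)) = X (a, i0) (b, i0)
      have := congr_fun (congr_fun hXherm (a, i0)) (b, i0)
      rw [Matrix.conjTranspose_apply] at this
      exact this
    have hρsplit : ρ = NormedSpace.exp D ⊗ₖ NormedSpace.exp Cc := by
      rw [← hexpH, hHsplit, exp_kron_sum]
    have hEDpd : (NormedSpace.exp D).PosDef := exp_hermitian_posDef hDherm
    have hECpd : (NormedSpace.exp Cc).PosDef := exp_hermitian_posDef hCcherm
    set c := (NormedSpace.exp D).trace with hc
    have hσ2 : σ = c • NormedSpace.exp Cc := by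
      rw [hσp, hρsplit, ptr_kron]
    have hcpos : 0 < c := posDef_trace_pos hEDpd
    have hcre : 0 < c.re ∧ c.im = 0 := by
      have h := Complex.lt_def.mp hcpos
      exact ⟨by simpa using h.1, by simpa using h.2.symm⟩
    have hcreal : c = ((c.re : ℝ) : ℂ) := by
      rw [Complex.ext_iff]
      simp [hcre.2]
    have hcne : c ≠ 0 := ne_of_gt hcpos
    have hcinv_pos : 0 < c⁻¹ := by
      rw [hcreal, ← Complex.ofReal_inv]
      exact Complex.zero_lt_real.mpr (inv_pos.mpr hcre.1)
    refine ⟨c⁻¹ • NormedSpace.exp D, Matrix.PosDef.of_dotProduct_mulVec_pos ?_ ?_, ?_, ?_⟩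
    · show _ᴴ = _
      rw [Matrix.conjTranspose_smul, hEDpd.isHermitian.eq]
      congr 1
      rw [RCLike.star_def, Complex.conj_eq_iff_im]
      simp [hcre.2]
    · intro x hx
      rw [Matrix.smul_mulVec, dotProduct_smul, smul_eq_mul]
      exact mul_pos hcinv_pos (hEDpd.dotProduct_mulVec_pos hx)
    · rw [Matrix.trace_smul, smul_eq_mul, inv_mul_cancel₀ hcne]
    · rw [hσ2, Matrix.smul_kronecker, Matrix.kronecker_smul, smul_smul,
        inv_mul_cancel₀ hcne, one_smul, hρsplit]

end Normed

end Stmt0Aux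

/-- For a positive definite density matrix `ρ` on `M_k(ℂ) ⊗ M_n(ℂ)` with
partial trace `σ` over the first factor, `ρ` factorizes as `τ ⊗ σ` with `τ` a positive
definite density matrix iff the modular group `Ad(ρ^{it})`, with
`ρ^{it} = exp(i t · log ρ)` (`log` via the functional calculus for Hermitian matrices),
leaves the subalgebra `1_k ⊗ M_n(ℂ)` invariant for all `t ∈ ℝ`. -/
theorem stmt_0 (k n : ℕ) (hk : 1 ≤ k) (hn : 1 ≤ n)
    (ρ : Matrix (Fin k × Fin n) (Fin k × Fin n) ℂ)
    (hρ : ρ.PosDef) (hρtr : ρ.trace = 1)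
    (σ : Matrix (Fin n) (Fin n) ℂ)
    (hσ : ∀ B : Matrix (Fin n) (Fin n) ℂ,
      (σ * B).trace = (ρ * ((1 : Matrix (Fin k) (Fin k) ℂ) ⊗ₖ B)).trace) :
    (∃ τ : Matrix (Fin k) (Fin k) ℂ, τ.PosDef ∧ τ.trace = 1 ∧ ρ = τ ⊗ₖ σ) ↔
      (∀ (t : ℝ) (A : Matrix (Fin n) (Fin n) ℂ), ∃ B : Matrix (Fin n) (Fin n) ℂ,
        NormedSpace.exp ((Complex.I * (t : ℂ)) • (hρ.isHermitian.cfc Real.log)) *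
            ((1 : Matrix (Fin k) (Fin k) ℂ) ⊗ₖ A) *
          NormedSpace.exp ((-(Complex.I * (t : ℂ))) • (hρ.isHermitian.cfc Real.log)) =
        (1 : Matrix (Fin k) (Fin k) ℂ) ⊗ₖ B) := by
  exact Stmt0Aux.main k n hk hn ρ hρ hρtr σ hσ
end

section
/- Let k, n ≥ 1 and let ρ be a positive definite matrix on M_k(ℂ)⊗M_n(ℂ) with trace 1 such that for every A ∈ M_n(ℂ) there exists B ∈ M_n(ℂ) with ρ(1_k⊗A) = (1_k⊗B)ρ. Then there exist a positive definite density matrix τ ∈ M_k(ℂ) and a positive definite density matrix σ' ∈ M_n(ℂ) such that ρ = τ⊗σ'; moreover σ' is the partial trace of ρ over M_k(ℂ), i.e., tr(σ'B) = tr(ρ(1_k⊗B)) for all B ∈ M_n(ℂ). -/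
open Matrix Kronecker ComplexOrder

private lemma cinv_pos {z : ℂ} (hz : 0 < z) : 0 < z⁻¹ := by
  rw [Complex.lt_def] at hz ⊢
  obtain ⟨h1, h2⟩ := hz
  simp only [Complex.zero_re, Complex.zero_im] at h1 h2
  constructor
  · rw [Complex.inv_re, Complex.normSq_apply, ← h2, Complex.zero_re]
    positivity
  · simp [Complex.inv_im, ← h2]

private lemma conj_of_pos {z : ℂ} (hz : 0 < z) : (starRingEnd ℂ) z = z := by
  rw [Complex.lt_def] at hz
  exact Complex.conj_eq_iff_im.2 hz.2.symm

private lemma diag_pos' {m : Type*} [Fintype m] [DecidableEq m] {M : Matrix m m ℂ}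
    (hM : M.PosDef) (a : m) : 0 < M a a := by
  have h := hM.dotProduct_mulVec_pos (x := Pi.single a 1)
    (fun h => one_ne_zero (show (1:ℂ) = 0 by simpa using congrFun h a))
  simpa [dotProduct, mulVec, Pi.single_apply] using h

private lemma block_posdef (k n : ℕ) (i0 : Fin k)
    (ρ : Matrix (Fin k × Fin n) (Fin k × Fin n) ℂ) (hρ : ρ.PosDef) :
    (Matrix.of (fun a b => ρ (i0,a) (i0,b)) : Matrix (Fin n) (Fin n) ℂ).PosDef := by
  refine posDef_iff_dotProduct_mulVec.mpr ⟨?_, ?_⟩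
  · ext a b
    simp only [conjTranspose_apply, of_apply]
    exact hρ.1.apply _ _
  · intro x hx
    set y : Fin k × Fin n → ℂ := fun p => if p.1 = i0 then x p.2 else 0 with hy
    have hy0 : y ≠ 0 := by
      obtain ⟨b, hb⟩ := Function.ne_iff.1 hx
      exact Function.ne_iff.2 ⟨(i0, b), by simpa [hy] using hb⟩
    have h := hρ.dotProduct_mulVec_pos hy0
    have heq : star y ⬝ᵥ ρ *ᵥ y = star x ⬝ᵥ (Matrix.of fun a b => ρ (i0,a) (i0,b)) *ᵥ x := by
      simp [dotProduct, mulVec, Fintype.sum_prod_type, hy, apply_ite, mul_ite, ite_mul,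
        Finset.mul_sum, Finset.sum_ite_eq, Finset.sum_ite_eq']
    rwa [heq] at h

private lemma block_eq (k n : ℕ) (ρ : Matrix (Fin k × Fin n) (Fin k × Fin n) ℂ)
    (A B : Matrix (Fin n) (Fin n) ℂ)
    (h : ρ * ((1 : Matrix (Fin k) (Fin k) ℂ) ⊗ₖ A) = ((1 : Matrix (Fin k) (Fin k) ℂ) ⊗ₖ B) * ρ)
    (i j : Fin k) :
    (Matrix.of fun a b => ρ (i,a) (j,b)) * A = B * (Matrix.of fun a b => ρ (i,a) (j,b)) := by
  ext a b
  have h2 := Matrix.ext_iff.2 h (i,a) (j,b)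
  simp only [mul_apply, Fintype.sum_prod_type, kroneckerMap_apply, one_apply, ite_mul, mul_ite,
    mul_zero, zero_mul, one_mul, mul_one, Finset.sum_ite_irrel, Finset.sum_const_zero,
    Finset.sum_ite_eq, Finset.sum_ite_eq',
    Finset.mem_univ, if_true, of_apply] at h2 ⊢
  exact h2

private lemma scalar_of_rel (n : ℕ) (σ D : Matrix (Fin n) (Fin n) ℂ) (hσ : σ.PosDef)
    (h : ∀ A : Matrix (Fin n) (Fin n) ℂ, ∃ B, σ * A = B * σ ∧ D * A = B * D) :
    ∃ r : ℂ, D = r • σ := by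
  have hdet : σ.det ≠ 0 := hσ.det_pos.ne'
  have hσi : σ * σ⁻¹ = 1 := mul_nonsing_inv σ (Ne.isUnit hdet)
  have hσi' : σ⁻¹ * σ = 1 := nonsing_inv_mul σ (Ne.isUnit hdet)
  have hE : (σ⁻¹ * D) ∈ Set.range (Matrix.scalar (Fin n)) := by
    rw [mem_range_scalar_iff_commute_single']
    intro a b
    obtain ⟨B, hB1, hB2⟩ := h (Matrix.single a b 1)
    have hA : Matrix.single a b 1 = σ⁻¹ * B * σ := by
      rw [Matrix.mul_assoc, ← hB1, ← Matrix.mul_assoc, hσi', Matrix.one_mul]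
    show Matrix.single a b 1 * (σ⁻¹ * D) = (σ⁻¹ * D) * Matrix.single a b 1
    rw [Matrix.mul_assoc, hB2, hA, Matrix.mul_assoc, Matrix.mul_assoc,
      ← Matrix.mul_assoc σ, hσi, Matrix.one_mul]
  obtain ⟨r, hr⟩ := hE
  refine ⟨r, ?_⟩
  have hD : D = σ * (σ⁻¹ * D) := by rw [← Matrix.mul_assoc, hσi, Matrix.one_mul]
  rw [hD, ← hr]
  ext a b
  simp [scalar_apply, Matrix.mul_diagonal, mul_comm]

/-- If `ρ` is a positive definite trace-one matrix on `M_k(ℂ) ⊗ M_n(ℂ)` such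
that for every `A ∈ M_n(ℂ)` there is `B ∈ M_n(ℂ)` with `ρ(1_k ⊗ A) = (1_k ⊗ B)ρ`, then
`ρ = τ ⊗ σ'` for positive definite density matrices `τ ∈ M_k(ℂ)` and `σ' ∈ M_n(ℂ)`, where
`σ'` is the partial trace of `ρ` over `M_k(ℂ)`. -/
theorem stmt_1 (k n : ℕ) (hk : 1 ≤ k) (hn : 1 ≤ n)
    (ρ : Matrix (Fin k × Fin n) (Fin k × Fin n) ℂ)
    (hρ : ρ.PosDef) (hρtr : ρ.trace = 1)
    (hcomm : ∀ A : Matrix (Fin n) (Fin n) ℂ, ∃ B : Matrix (Fin n) (Fin n) ℂ,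
      ρ * ((1 : Matrix (Fin k) (Fin k) ℂ) ⊗ₖ A) = ((1 : Matrix (Fin k) (Fin k) ℂ) ⊗ₖ B) * ρ) :
    ∃ (τ : Matrix (Fin k) (Fin k) ℂ) (σ' : Matrix (Fin n) (Fin n) ℂ),
      τ.PosDef ∧ τ.trace = 1 ∧ σ'.PosDef ∧ σ'.trace = 1 ∧ ρ = τ ⊗ₖ σ' ∧
      (∀ B : Matrix (Fin n) (Fin n) ℂ,
        (σ' * B).trace = (ρ * ((1 : Matrix (Fin k) (Fin k) ℂ) ⊗ₖ B)).trace) := by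
  have i0 : Fin k := ⟨0, hk⟩
  have a0 : Fin n := ⟨0, hn⟩
  set σ : Matrix (Fin n) (Fin n) ℂ := Matrix.of (fun a b => ρ (i0,a) (i0,b)) with hσdef
  have hσ : σ.PosDef := block_posdef k n i0 ρ hρ
  have hblocks : ∀ i j : Fin k, ∃ r : ℂ,
      (Matrix.of fun a b => ρ (i,a) (j,b) : Matrix (Fin n) (Fin n) ℂ) = r • σ := by
    intro i j
    apply scalar_of_rel n σ _ hσ
    intro A
    obtain ⟨B, hB⟩ := hcomm A
    exact ⟨B, block_eq k n ρ A B hB i0 i0, block_eq k n ρ A B hB i j⟩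
  choose c hc using hblocks
  set τ' : Matrix (Fin k) (Fin k) ℂ := Matrix.of c with hτ'def
  have hρeq : ρ = τ' ⊗ₖ σ := by
    ext ⟨i,a⟩ ⟨j,b⟩
    have h2 := Matrix.ext_iff.2 (hc i j) a b
    simpa [kroneckerMap_apply, hτ'def] using h2
  set t : ℂ := σ.trace with htdef
  have ht : 0 < t := by
    rw [htdef, Matrix.trace]
    apply Finset.sum_pos
    · intro a _
      exact diag_pos' hσ a
    · exact ⟨a0, Finset.mem_univ _⟩
  have htne : t ≠ 0 := ht.ne'
  set σ' : Matrix (Fin n) (Fin n) ℂ := t⁻¹ • σ with hσ'def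
  set τ : Matrix (Fin k) (Fin k) ℂ := t • τ' with hτdef
  have hρeq' : ρ = τ ⊗ₖ σ' := by
    rw [hρeq, hτdef, hσ'def, smul_kronecker, kronecker_smul, smul_smul,
      mul_inv_cancel₀ htne, one_smul]
  have hσ'pos : σ'.PosDef := by
    refine posDef_iff_dotProduct_mulVec.mpr ⟨?_, ?_⟩
    · show (t⁻¹ • σ)ᴴ = t⁻¹ • σ
      rw [conjTranspose_smul, hσ.1.eq, RCLike.star_def, map_inv₀, conj_of_pos ht]
    · intro x hx
      show 0 < star x ⬝ᵥ (t⁻¹ • σ) *ᵥ x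
      rw [smul_mulVec, dotProduct_smul, smul_eq_mul]
      exact mul_pos (cinv_pos ht) (hσ.dotProduct_mulVec_pos hx)
  have hσ'tr : σ'.trace = 1 := by
    rw [hσ'def, trace_smul, smul_eq_mul, ← htdef, inv_mul_cancel₀ htne]
  -- hermitian-ness of τ'
  have hcconj : ∀ i j : Fin k, (starRingEnd ℂ) (c j i) = c i j := by
    intro i j
    have hσ0 : 0 < σ a0 a0 := diag_pos' hσ a0
    have h1 : ρ (i,a0) (j,a0) = c i j * σ a0 a0 := Matrix.ext_iff.2 (hc i j) a0 a0
    have h2 : ρ (j,a0) (i,a0) = c j i * σ a0 a0 := Matrix.ext_iff.2 (hc j i) a0 a0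
    have h3 : (starRingEnd ℂ) (ρ (j,a0) (i,a0)) = ρ (i,a0) (j,a0) := hρ.1.apply _ _
    rw [h1, h2, _root_.map_mul, conj_of_pos hσ0] at h3
    exact mul_right_cancel₀ hσ0.ne' h3
  have hτpos : τ.PosDef := by
    refine posDef_iff_dotProduct_mulVec.mpr ⟨?_, ?_⟩
    · ext i j
      simp only [conjTranspose_apply, hτdef, Matrix.smul_apply, star_smul, smul_eq_mul,
        hτ'def, of_apply, RCLike.star_def]
      rw [_root_.map_mul, conj_of_pos ht, hcconj i j]
    · intro v hv
      set x : Fin k × Fin n → ℂ := fun p => if p.2 = a0 then v p.1 else 0 with hx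
      have hx0 : x ≠ 0 := by
        obtain ⟨i, hi⟩ := Function.ne_iff.1 hv
        exact Function.ne_iff.2 ⟨(i, a0), by simpa [hx] using hi⟩
      have hpos := hρ.dotProduct_mulVec_pos hx0
      have key : star x ⬝ᵥ ρ *ᵥ x = (star v ⬝ᵥ τ *ᵥ v) * σ' a0 a0 := by
        rw [hρeq']
        simp [dotProduct, mulVec, Fintype.sum_prod_type, hx, kroneckerMap_apply, apply_ite,
          mul_ite, ite_mul, mul_zero, zero_mul, Finset.sum_ite_irrel, Finset.sum_const_zero,
          Finset.sum_ite_eq, Finset.sum_ite_eq', Finset.sum_mul, Finset.mul_sum,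
          mul_assoc, mul_comm, mul_left_comm]
      have hσ'0 : 0 < σ' a0 a0 := diag_pos' hσ'pos a0
      have : star v ⬝ᵥ τ *ᵥ v = (star x ⬝ᵥ ρ *ᵥ x) * (σ' a0 a0)⁻¹ := by
        rw [key, mul_assoc, mul_inv_cancel₀ hσ'0.ne', mul_one]
      rw [this]
      exact mul_pos hpos (cinv_pos hσ'0)
  have hτtr : τ.trace = 1 := by
    have h1 : ρ.trace = τ.trace * σ'.trace := by rw [hρeq', trace_kronecker]
    rw [hρtr, hσ'tr, mul_one] at h1
    exact h1.symm
  refine ⟨τ, σ', hτpos, hτtr, hσ'pos, hσ'tr, hρeq', fun B => ?_⟩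
  rw [hρeq', ← Matrix.mul_kronecker_mul, trace_kronecker, Matrix.mul_one, hτtr, one_mul]
end

section
/- Let F : M_n(ℂ) → M_{kn}(ℂ) ≅ M_k(ℂ)⊗M_n(ℂ) be given by F(B) = 1_k⊗B, let ρ be a positive definite density matrix on M_{kn}(ℂ), and let σ ∈ M_n(ℂ) be the (positive definite) density matrix with tr(σB) = tr(ρ(1_k⊗B)) for all B. Then the following are equivalent: (a) there exists a UCP map G : M_{kn}(ℂ) → M_n(ℂ) such that tr(σG(A)) = tr(ρA) for all A ∈ M_{kn}(ℂ) and G(1_k⊗B) = B for all B ∈ M_n(ℂ) (a disintegration of (F, ω), which in this faithful case satisfies G∘F = id exactly); (b) there exists a positive definite density matrix τ ∈ M_k(ℂ) with ρ = τ⊗σ. -/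
open Matrix Kronecker ComplexOrder

/-- The `k`-th amplification `id_{M_k(ℂ)} ⊗ Φ` of a map `Φ` between matrix algebras,
realized on matrices indexed by product types. -/
def amplify {n m : Type*} (Φ : Matrix n n ℂ → Matrix m m ℂ) (k : ℕ)
    (M : Matrix (Fin k × n) (Fin k × n) ℂ) : Matrix (Fin k × m) (Fin k × m) ℂ :=
  Matrix.of fun p q => Φ (Matrix.of fun a b => M (p.1, a) (q.1, b)) p.2 q.2

/-- A map between matrix algebras is completely positive if all of its amplifications
preserve positive semidefiniteness. -/
def IsCP {n m : Type*} [Fintype n] [Fintype m] (Φ : Matrix n n ℂ → Matrix m m ℂ) : Prop :=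
  ∀ (k : ℕ) (M : Matrix (Fin k × n) (Fin k × n) ℂ), M.PosSemidef → (amplify Φ k M).PosSemidef


set_option linter.unusedSectionVars false
set_option maxHeartbeats 1000000
section Helpers

lemma psd_sum {ι m : Type*} [Fintype m] (s : Finset ι) (f : ι → Matrix m m ℂ)
    (h : ∀ i ∈ s, (f i).PosSemidef) : (∑ i ∈ s, f i).PosSemidef := by
  classical
  induction s using Finset.induction with
  | empty => simpa using Matrix.PosSemidef.zero
  | insert _ _ hx ih =>
    rw [Finset.sum_insert hx]
    exact ((h _ (Finset.mem_insert_self _ _)).add (ih fun i hi => h i (Finset.mem_insert_of_mem hi)))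

lemma quad_eq_zero {m : Type*} [Fintype m] [DecidableEq m] (M : Matrix m m ℂ)
    (h : ∀ v : m → ℂ, star v ⬝ᵥ M *ᵥ v = 0) : M = 0 := by
  have hexp : ∀ (v w : m → ℂ) (c : ℂ),
      c * (star v ⬝ᵥ M *ᵥ w) + star c * (star w ⬝ᵥ M *ᵥ v) = 0 := by
    intro v w c
    have h0 := h (v + c • w)
    have hw := h w
    simp only [star_add, star_smul, Matrix.mulVec_add, Matrix.mulVec_smul,
      dotProduct_add, add_dotProduct, smul_dotProduct, dotProduct_smul,
      smul_eq_mul, h v, hw] at h0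
    linear_combination h0
  have hzero : ∀ v w, star v ⬝ᵥ M *ᵥ w = 0 := by
    intro v w
    have h1 := hexp v w 1
    have h2 := hexp v w Complex.I
    rw [star_one, one_mul] at h1
    have hsI : star Complex.I = -Complex.I := by
      simp [Complex.star_def, Complex.conj_I]
    rw [hsI] at h2
    linear_combination h1/2 - Complex.I * h2/2 + (star v ⬝ᵥ M *ᵥ w - star w ⬝ᵥ M *ᵥ v)/2 * Complex.I_sq
  ext a b
  have := hzero (Pi.single a 1) (Pi.single b 1)
  simp only [Matrix.zero_apply]
  simpa [dotProduct, Matrix.mulVec, Pi.single_apply, Finset.sum_ite_eq, mul_comm] using this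


lemma kron_conjT {k n : ℕ} (A : Matrix (Fin k) (Fin k) ℂ) (B : Matrix (Fin n) (Fin n) ℂ) :
    (A ⊗ₖ B)ᴴ = Aᴴ ⊗ₖ Bᴴ := by
  ext ⟨i, a⟩ ⟨j, b⟩
  simp [Matrix.conjTranspose_apply, Matrix.kroneckerMap_apply]

lemma trace_mul_std {p : Type*} [Fintype p] [DecidableEq p] (M : Matrix p p ℂ) (i j : p) :
    (M * Matrix.single i j (1 : ℂ)).trace = M j i := by
  simp [Matrix.trace, Matrix.diag, Matrix.mul_apply, Matrix.single, ite_and,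
    Finset.sum_ite_eq, Finset.sum_ite_eq']

lemma kron_std {k n : ℕ} (i j : Fin k) (a b : Fin n) :
    Matrix.single i j (1:ℂ) ⊗ₖ Matrix.single a b (1:ℂ) = Matrix.single (i,a) (j,b) 1 := by
  ext ⟨p, x⟩ ⟨q, y⟩
  simp [Matrix.kroneckerMap_apply, Matrix.single, Prod.ext_iff, ite_and]
  aesop

lemma cpos_of_mul (z s p : ℂ) (h : z * s = p) (hp : 0 < p) (hs : 0 < s) : 0 < z := by
  rw [Complex.lt_def] at hp hs ⊢
  simp only [Complex.zero_re, Complex.zero_im] at *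
  rw [Complex.ext_iff] at h
  simp only [Complex.mul_re, Complex.mul_im] at h
  obtain ⟨h1, h2⟩ := h
  obtain ⟨hp1, hp2⟩ := hp
  obtain ⟨hs1, hs2⟩ := hs
  rw [← hs2, mul_zero, zero_add, ← hp2] at h2
  have hzim : z.im = 0 := (mul_eq_zero.mp h2).resolve_right (ne_of_gt hs1)
  rw [← hs2, hzim, mul_zero, sub_zero] at h1
  exact ⟨by nlinarith, hzim.symm⟩

noncomputable def Gtau (k n : ℕ) (τ : Matrix (Fin k) (Fin k) ℂ) :
    Matrix (Fin k × Fin n) (Fin k × Fin n) ℂ →ₗ[ℂ] Matrix (Fin n) (Fin n) ℂ where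
  toFun A := Matrix.of fun a b => ∑ i, ∑ j, τ j i * A (i, a) (j, b)
  map_add' A B := by
    ext a b
    simp [Matrix.add_apply, mul_add, Finset.sum_add_distrib]
  map_smul' c A := by
    ext a b
    simp only [Matrix.of_apply, Matrix.smul_apply, smul_eq_mul, RingHom.id_apply, Finset.mul_sum]
    exact Finset.sum_congr rfl fun i _ => Finset.sum_congr rfl fun j _ => by ring

lemma Gtau_apply (k n : ℕ) (τ : Matrix (Fin k) (Fin k) ℂ) (A) (a b : Fin n) :
    Gtau k n τ A a b = ∑ i, ∑ j, τ j i * A (i, a) (j, b) := rfl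

lemma Gtau_isCP (k n : ℕ) (τ : Matrix (Fin k) (Fin k) ℂ) (hτ : τ.PosSemidef) :
    IsCP (⇑(Gtau k n τ)) := by
  intro k' M hM
  set S := (open scoped MatrixOrder in CFC.sqrt τ) with hS
  have hSS : S * S = τ := by open scoped MatrixOrder in exact CFC.sqrt_mul_sqrt_self τ hτ.nonneg
  have hSherm : Sᴴ = S := by
    open scoped MatrixOrder in exact (CFC.sqrt_nonneg τ).posSemidef.isHermitian
  have hτent : ∀ i j, τ j i = ∑ c, S j c * star (S i c) := by
    intro i j
    rw [← hSS, Matrix.mul_apply]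
    refine Finset.sum_congr rfl fun c _ => ?_
    have h1 : S c i = star (S i c) := by
      conv_lhs => rw [← hSherm, Matrix.conjTranspose_apply]
    rw [h1]
  -- the Kraus-type operators
  set W : Fin k → Matrix (Fin k' × (Fin k × Fin n)) (Fin k' × Fin n) ℂ :=
    fun c => Matrix.of fun u q => S u.2.1 c * (if u.1 = q.1 ∧ u.2.2 = q.2 then 1 else 0) with hW
  have key : amplify (⇑(Gtau k n τ)) k' M = ∑ c, (W c)ᴴ * M * (W c) := by
    ext ⟨p, a⟩ ⟨q, b⟩
    rw [Matrix.sum_apply]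
    simp only [amplify, Matrix.of_apply, Gtau_apply, Matrix.mul_apply,
      Matrix.conjTranspose_apply, hW, Matrix.of_apply, Fintype.sum_prod_type]
    simp only [star_mul', apply_ite (star : ℂ → ℂ), star_one, star_zero, mul_ite, mul_one, mul_zero,
      ite_mul, zero_mul, Finset.sum_ite_eq, Finset.sum_ite_eq', Finset.mem_univ, if_true]
    simp only [ite_and, Finset.sum_ite_irrel, Finset.sum_const_zero, Finset.sum_ite_eq,
      Finset.sum_ite_eq', Finset.mem_univ, if_true]
    simp only [hτent, Finset.sum_mul, Finset.mul_sum]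
    conv_rhs => rw [Finset.sum_comm]
    conv_lhs => rw [Finset.sum_comm]
    refine Finset.sum_congr rfl fun j _ => ?_
    rw [Finset.sum_comm]
    refine Finset.sum_congr rfl fun c _ => Finset.sum_congr rfl fun i _ => by ring
  rw [key]
  exact psd_sum _ _ fun c _ => (hM.conjTranspose_mul_mul_same (W c))

lemma Gtau_one (k n : ℕ) (τ : Matrix (Fin k) (Fin k) ℂ) (hτtr : τ.trace = 1) :
    Gtau k n τ 1 = 1 := by
  ext a b
  rw [Gtau_apply]
  by_cases hab : a = b
  · subst hab
    simp only [Matrix.one_apply, Prod.mk.injEq, ite_and, mul_ite, mul_one, mul_zero,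
      and_true, Finset.sum_ite_eq, Finset.mem_univ, if_true]
    simpa [Matrix.trace, Matrix.diag] using hτtr
  · simp [Matrix.one_apply, Prod.ext_iff, hab]

lemma Gtau_kron (k n : ℕ) (τ : Matrix (Fin k) (Fin k) ℂ) (hτtr : τ.trace = 1)
    (B : Matrix (Fin n) (Fin n) ℂ) :
    Gtau k n τ ((1 : Matrix (Fin k) (Fin k) ℂ) ⊗ₖ B) = B := by
  ext a b
  rw [Gtau_apply]
  simp only [Matrix.kroneckerMap_apply, Matrix.one_apply, ite_mul, one_mul, zero_mul,
    mul_ite, mul_zero, Finset.sum_ite_eq, Finset.mem_univ, if_true]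
  rw [← Finset.sum_mul]
  rw [show (∑ x : Fin k, τ x x) = 1 from by simpa [Matrix.trace, Matrix.diag] using hτtr, one_mul]

lemma Gtau_tr (k n : ℕ) (τ : Matrix (Fin k) (Fin k) ℂ) (σ : Matrix (Fin n) (Fin n) ℂ)
    (A : Matrix (Fin k × Fin n) (Fin k × Fin n) ℂ) :
    (σ * Gtau k n τ A).trace = ((τ ⊗ₖ σ) * A).trace := by
  simp only [Matrix.trace, Matrix.diag, Matrix.mul_apply, Gtau_apply,
    Fintype.sum_prod_type, Matrix.kroneckerMap_apply]
  have L : (∑ y : Fin n × Fin n × Fin k × Fin k,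
      σ y.1 y.2.1 * (τ y.2.2.2 y.2.2.1 * A (y.2.2.1, y.2.1) (y.2.2.2, y.1)))
      = ∑ x : Fin n, ∑ x_1 : Fin n, σ x x_1 * ∑ i : Fin k, ∑ j : Fin k, τ j i * A (i, x_1) (j, x) := by
    simp [Fintype.sum_prod_type, Finset.mul_sum]
  have R : (∑ x : Fin k × Fin n × Fin k × Fin n,
      τ x.1 x.2.2.1 * σ x.2.1 x.2.2.2 * A (x.2.2.1, x.2.2.2) (x.1, x.2.1))
      = ∑ x : Fin k, ∑ x_1 : Fin n, ∑ x_2 : Fin k, ∑ x_3 : Fin n,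
        τ x x_2 * σ x_1 x_3 * A (x_2, x_3) (x, x_1) := by
    simp [Fintype.sum_prod_type]
  rw [← L, ← R]
  exact (Fintype.sum_bijective (fun x : Fin k × Fin n × Fin k × Fin n => ((x.2.1, x.2.2.2, x.2.2.1, x.1) : Fin n × Fin n × Fin k × Fin k))
    (Equiv.mk (fun x : Fin k × Fin n × Fin k × Fin n => ((x.2.1, x.2.2.2, x.2.2.1, x.1) : Fin n × Fin n × Fin k × Fin k))
      (fun y => (y.2.2.2, y.1, y.2.2.1, y.2.1)) (fun x => rfl) (fun y => rfl)).bijective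
    _ _ (fun x => by ring)).symm

section Schwarz
variable {ι m : Type*} [Fintype ι] [DecidableEq ι] [Fintype m] [DecidableEq m]
variable (G : Matrix ι ι ℂ →ₗ[ℂ] Matrix m m ℂ)

/-- the 2x2 block matrix [[xᴴx, xᴴ],[x,1]] as Wᴴ*W -/
def bigW (x : Matrix ι ι ℂ) : Matrix (Fin 2 × ι) (Fin 2 × ι) ℂ :=
  Matrix.of fun p q =>
    if p.1 = 0 then (if q.1 = 0 then x p.2 q.2 else if p.2 = q.2 then 1 else 0) else 0

lemma bigM00 (x : Matrix ι ι ℂ) :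
    (Matrix.of fun a b => ((bigW x)ᴴ * (bigW x)) ((0 : Fin 2), a) ((0 : Fin 2), b)) = xᴴ * x := by
  ext a b
  simp [bigW, Matrix.mul_apply, Matrix.conjTranspose_apply, Fintype.sum_prod_type,
    Fin.sum_univ_two]

lemma bigM01 (x : Matrix ι ι ℂ) :
    (Matrix.of fun a b => ((bigW x)ᴴ * (bigW x)) ((0 : Fin 2), a) ((1 : Fin 2), b)) = xᴴ := by
  ext a b
  simp [bigW, Matrix.mul_apply, Matrix.conjTranspose_apply, Fintype.sum_prod_type,
    Fin.sum_univ_two, Finset.sum_ite_eq, Finset.sum_ite_eq']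

lemma bigM10 (x : Matrix ι ι ℂ) :
    (Matrix.of fun a b => ((bigW x)ᴴ * (bigW x)) ((1 : Fin 2), a) ((0 : Fin 2), b)) = x := by
  ext a b
  simp [bigW, Matrix.mul_apply, Matrix.conjTranspose_apply, Fintype.sum_prod_type,
    Fin.sum_univ_two, Finset.sum_ite_eq, Finset.sum_ite_eq']

lemma bigM11 (x : Matrix ι ι ℂ) :
    (Matrix.of fun a b => ((bigW x)ᴴ * (bigW x)) ((1 : Fin 2), a) ((1 : Fin 2), b)) = 1 := by
  ext a b
  simp [bigW, Matrix.mul_apply, Matrix.conjTranspose_apply, Fintype.sum_prod_type,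
    Fin.sum_univ_two, Finset.sum_ite_eq, Finset.sum_ite_eq', Matrix.one_apply, eq_comm]

lemma cp_star (hCP : IsCP (⇑G)) (x : Matrix ι ι ℂ) : G xᴴ = (G x)ᴴ := by
  have hM : ((bigW x)ᴴ * (bigW x)).PosSemidef := Matrix.posSemidef_conjTranspose_mul_self _
  have hN := hCP 2 _ hM
  have hherm := hN.isHermitian
  ext a b
  have h := congr_fun (congr_fun hherm (((0 : Fin 2), a))) (((1 : Fin 2), b))
  rw [Matrix.conjTranspose_apply] at h
  simp only [amplify, Matrix.of_apply] at h
  rw [bigM10, bigM01] at h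
  rw [Matrix.conjTranspose_apply]
  exact h.symm

set_option linter.unusedSectionVars false

lemma cp_schwarz (hCP : IsCP (⇑G)) (hG1 : G 1 = 1) (x : Matrix ι ι ℂ) :
    (G (xᴴ * x) - (G x)ᴴ * G x).PosSemidef := by
  have hM : ((bigW x)ᴴ * (bigW x)).PosSemidef := Matrix.posSemidef_conjTranspose_mul_self _
  have hN := hCP 2 _ hM
  set N := amplify (⇑G) 2 ((bigW x)ᴴ * (bigW x)) with hNdef
  set P : Matrix (Fin 2 × m) m ℂ :=
    Matrix.of fun p a => if p.1 = 0 then (if p.2 = a then 1 else 0) else -(G x p.2 a) with hP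
  have key : Pᴴ * N * P = G (xᴴ * x) - (G x)ᴴ * G x := by
    have e00 : ∀ a b, N ((0 : Fin 2), a) ((0 : Fin 2), b) = G (xᴴ * x) a b := by
      intro a b
      show G _ a b = _
      rw [bigM00]
    have e01 : ∀ a b, N ((0 : Fin 2), a) ((1 : Fin 2), b) = (G x)ᴴ a b := by
      intro a b
      show G _ a b = _
      rw [bigM01, cp_star G hCP]
    have e10 : ∀ a b, N ((1 : Fin 2), a) ((0 : Fin 2), b) = G x a b := by
      intro a b
      show G _ a b = _
      rw [bigM10]
    have e11 : ∀ a b, N ((1 : Fin 2), a) ((1 : Fin 2), b) = (1 : Matrix m m ℂ) a b := by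
      intro a b
      show G _ a b = _
      rw [bigM11, hG1]
    ext a b
    rw [Matrix.mul_apply]
    simp only [Matrix.mul_apply, Fintype.sum_prod_type, Fin.sum_univ_two,
      Matrix.conjTranspose_apply, hP, Matrix.of_apply]
    simp only [e00, e01, e10, e11]
    have h2 : ((1 : Fin 2) = (0 : Fin 2)) ↔ False := by simp [Fin.ext_iff]
    simp only [h2, if_false, if_true, eq_self_iff_true, star_neg, star_one, star_zero,
      apply_ite (star : ℂ → ℂ), mul_ite, ite_mul, one_mul, zero_mul, mul_one, mul_zero,
      neg_mul, mul_neg, neg_neg, Finset.sum_ite_eq, Finset.sum_ite_eq', Finset.mem_univ, if_true,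
      Matrix.sub_apply, Matrix.mul_apply, Matrix.one_apply, Matrix.conjTranspose_apply,
      Finset.sum_neg_distrib]
    simp only [add_neg_cancel, zero_mul, Finset.sum_const_zero, neg_zero, add_zero,
      sub_eq_add_neg]
  rw [← key]
  exact hN.conjTranspose_mul_mul_same P

lemma quad_conjT {p : Type*} [Fintype p] (M : Matrix p p ℂ) (v : p → ℂ) :
    star v ⬝ᵥ (Mᴴ *ᵥ v) = star (star v ⬝ᵥ (M *ᵥ v)) := by
  simp only [dotProduct, Matrix.mulVec, Matrix.conjTranspose_apply, star_sum, star_mul',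
    Finset.mul_sum, star_star, Pi.star_apply]
  rw [Finset.sum_comm]
  exact Finset.sum_congr rfl fun b _ => Finset.sum_congr rfl fun a _ => by ring

lemma real_helper (u d : ℝ) (hd : 0 ≤ d) (h : ∀ t : ℝ, 0 ≤ 2*t*u + t^2*d) : u = 0 := by
  have h1 := h (-(u/(d+1)))
  have hd1 : (0:ℝ) < d + 1 := by linarith
  have he : 2 * (-(u/(d+1))) * u + (-(u/(d+1)))^2 * d = (-(u^2) * (d+2))/(d+1)^2 := by
    field_simp
    ring
  rw [he, le_div_iff₀ (by positivity)] at h1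
  nlinarith [sq_nonneg u]

lemma complex_helper (α δ : ℂ) (hδ : 0 ≤ δ)
    (h : ∀ c : ℂ, 0 ≤ c * α + star c * star α + (c * star c) * δ) : α = 0 := by
  have hδ' : 0 ≤ δ.re ∧ δ.im = 0 := by
    rw [Complex.le_def] at hδ
    exact ⟨by simpa using hδ.1, by simpa using hδ.2.symm⟩
  have hre : α.re = 0 := by
    apply real_helper _ δ.re hδ'.1
    intro t
    have := h (t : ℂ)
    rw [Complex.le_def] at this
    obtain ⟨h1, -⟩ := this
    simp only [Complex.add_re, Complex.mul_re, Complex.mul_im, Complex.ofReal_re,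
      Complex.ofReal_im, Complex.zero_re, RCLike.star_def, Complex.conj_re, Complex.conj_im,
      Complex.conj_ofReal] at h1
    nlinarith [h1, hδ'.2]
  have him : α.im = 0 := by
    have hneg : -α.im = 0 := by
      apply real_helper _ δ.re hδ'.1
      intro t
      have := h ((t : ℂ) * Complex.I)
      rw [Complex.le_def] at this
      obtain ⟨h1, -⟩ := this
      simp only [Complex.add_re, Complex.mul_re, Complex.mul_im, Complex.ofReal_re,
        Complex.ofReal_im, Complex.zero_re, RCLike.star_def, Complex.conj_re, Complex.conj_im,
        Complex.conj_ofReal, Complex.I_re, Complex.I_im] at h1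
      nlinarith [h1, hδ'.2]
    linarith
  exact Complex.ext hre him

lemma quad_eq_zero' {p : Type*} [Fintype p] [DecidableEq p] (M : Matrix p p ℂ)
    (h : ∀ v : p → ℂ, star v ⬝ᵥ M *ᵥ v = 0) : M = 0 := quad_eq_zero M h

lemma mult_domain (hCP : IsCP (⇑G)) (hG1 : G 1 = 1) (x : Matrix ι ι ℂ)
    (hx : G (xᴴ * x) = (G x)ᴴ * G x) (y : Matrix ι ι ℂ) :
    G (xᴴ * y) = (G x)ᴴ * G y := by
  have hstar := cp_star G hCP
  rw [← sub_eq_zero]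
  apply quad_eq_zero'
  intro v
  have hδ : 0 ≤ star v ⬝ᵥ (G (yᴴ * y) - (G y)ᴴ * G y) *ᵥ v := (cp_schwarz G hCP hG1 y).dotProduct_mulVec_nonneg v
  apply complex_helper _ _ hδ
  intro c
  have hyx : G (yᴴ*x) - (G y)ᴴ * G x = (G (xᴴ*y) - (G x)ᴴ * G y)ᴴ := by
    have hxy : (xᴴ * y)ᴴ = yᴴ * x := by
      rw [Matrix.conjTranspose_mul, Matrix.conjTranspose_conjTranspose]
    rw [Matrix.conjTranspose_sub, Matrix.conjTranspose_mul, Matrix.conjTranspose_conjTranspose,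
      ← hstar (xᴴ * y), hxy]
  have hexp : G ((x + c•y)ᴴ * (x + c•y)) - (G (x + c•y))ᴴ * G (x + c•y)
      = c • (G (xᴴ*y) - (G x)ᴴ * G y) + star c • (G (xᴴ*y) - (G x)ᴴ * G y)ᴴ
        + (c * star c) • (G (yᴴ * y) - (G y)ᴴ * G y) := by
    have h1 : (x + c•y)ᴴ * (x + c•y)
        = xᴴ*x + c•(xᴴ*y) + star c•(yᴴ*x) + (c*star c)•(yᴴ*y) := by
      rw [Matrix.conjTranspose_add, Matrix.conjTranspose_smul]
      simp only [add_mul, mul_add, smul_mul_assoc, mul_smul_comm, smul_smul]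
      module
    have h2 : (G (x + c•y))ᴴ * G (x + c•y)
        = (G x)ᴴ*(G x) + c•((G x)ᴴ*(G y)) + star c•((G y)ᴴ*(G x)) + (c*star c)•((G y)ᴴ*(G y)) := by
      rw [LinearMap.map_add, LinearMap.map_smul, Matrix.conjTranspose_add,
        Matrix.conjTranspose_smul]
      simp only [add_mul, mul_add, smul_mul_assoc, mul_smul_comm, smul_smul]
      module
    rw [h1, LinearMap.map_add, LinearMap.map_add, LinearMap.map_add, LinearMap.map_smul,
      LinearMap.map_smul, LinearMap.map_smul, h2, hx, ← hyx]
    module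
  have hpos := (cp_schwarz G hCP hG1 (x + c•y)).dotProduct_mulVec_nonneg v
  rw [hexp] at hpos
  have hq := quad_conjT (G (xᴴ * y) - (G x)ᴴ * G y) v
  rw [Matrix.add_mulVec, Matrix.add_mulVec, Matrix.smul_mulVec, Matrix.smul_mulVec,
    Matrix.smul_mulVec, dotProduct_add, dotProduct_add, dotProduct_smul, dotProduct_smul,
    dotProduct_smul, hq] at hpos
  simpa only [smul_eq_mul] using hpos

end Schwarz

end Helpers

/-- For `F(B) = 1_k ⊗ B` and a positive definite density matrix `ρ` on
`M_{kn}(ℂ)` with partial trace `σ`, the pair `(F, tr(ρ ·))` admits a disintegration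
(a state-preserving UCP left inverse `G` of `F`) iff `ρ = τ ⊗ σ` for some positive
definite density matrix `τ ∈ M_k(ℂ)`. -/
theorem stmt_2 (k n : ℕ) (hk : 1 ≤ k) (hn : 1 ≤ n)
    (ρ : Matrix (Fin k × Fin n) (Fin k × Fin n) ℂ)
    (hρ : ρ.PosDef) (hρtr : ρ.trace = 1)
    (σ : Matrix (Fin n) (Fin n) ℂ)
    (hσ : ∀ B : Matrix (Fin n) (Fin n) ℂ,
      (σ * B).trace = (ρ * ((1 : Matrix (Fin k) (Fin k) ℂ) ⊗ₖ B)).trace) :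
    (∃ G : Matrix (Fin k × Fin n) (Fin k × Fin n) ℂ →ₗ[ℂ] Matrix (Fin n) (Fin n) ℂ,
      IsCP (⇑G) ∧ G 1 = 1 ∧
      (∀ A : Matrix (Fin k × Fin n) (Fin k × Fin n) ℂ, (σ * G A).trace = (ρ * A).trace) ∧
      (∀ B : Matrix (Fin n) (Fin n) ℂ, G ((1 : Matrix (Fin k) (Fin k) ℂ) ⊗ₖ B) = B)) ↔
    (∃ τ : Matrix (Fin k) (Fin k) ℂ, τ.PosDef ∧ τ.trace = 1 ∧ ρ = τ ⊗ₖ σ) := by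
  have a0 : Fin n := ⟨0, hn⟩
  -- facts about σ
  have hσent : ∀ a b, σ a b = ∑ p, ρ (p, a) (p, b) := by
    intro a b
    have h1 := hσ (Matrix.single b a 1)
    rw [trace_mul_std] at h1
    rw [h1]
    have h2 : (1 : Matrix (Fin k) (Fin k) ℂ) ⊗ₖ Matrix.single b a (1:ℂ)
        = ∑ p, Matrix.single (p, b) (p, a) 1 := by
      ext ⟨q, y⟩ ⟨p, x⟩
      simp only [Matrix.kroneckerMap_apply, Matrix.one_apply, Matrix.sum_apply,
        Matrix.single, Matrix.of_apply, Prod.ext_iff, ite_and]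
      by_cases h : q = p <;> by_cases hy : b = y <;> by_cases hx : a = x <;>
        simp [h, hy, hx, Finset.sum_ite_eq, Finset.sum_ite_eq']
    rw [h2, Matrix.mul_sum, Matrix.trace_sum]
    exact Finset.sum_congr rfl fun p _ => trace_mul_std ρ (p, b) (p, a)
  have hσPD : σ.PosDef := by
    refine Matrix.PosDef.of_dotProduct_mulVec_pos ?_ ?_
    · ext a b
      rw [Matrix.conjTranspose_apply, hσent a b, hσent b a, star_sum]
      refine Finset.sum_congr rfl fun p _ => ?_
      have := congr_fun (congr_fun hρ.isHermitian.eq (p, a)) (p, b)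
      rw [Matrix.conjTranspose_apply] at this
      exact this
    · intro x hx
      have key : star x ⬝ᵥ σ *ᵥ x
          = ∑ p, star (fun q : Fin k × Fin n => if q.1 = p then x q.2 else 0) ⬝ᵥ
              ρ *ᵥ (fun q : Fin k × Fin n => if q.1 = p then x q.2 else 0) := by
        have expand : ∀ p : Fin k, star (fun q : Fin k × Fin n => if q.1 = p then x q.2 else 0) ⬝ᵥ
            ρ *ᵥ (fun q : Fin k × Fin n => if q.1 = p then x q.2 else 0)
            = ∑ a, ∑ b, star (x a) * (ρ (p, a) (p, b) * x b) := by
          intro p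
          simp only [dotProduct, Matrix.mulVec, Pi.star_apply, Fintype.sum_prod_type,
            apply_ite (star : ℂ → ℂ), star_zero, ite_mul, zero_mul, mul_ite, mul_zero,
            Finset.sum_ite_irrel, Finset.sum_const_zero, Finset.sum_ite_eq,
            Finset.sum_ite_eq', Finset.mem_univ, if_true, Finset.mul_sum]
        simp only [expand]
        simp only [dotProduct, Matrix.mulVec, Pi.star_apply, hσent, Finset.sum_mul,
          Finset.mul_sum]
        have h1 : ∀ a : Fin n, (∑ b : Fin n, ∑ i : Fin k, star (x a) * (ρ (i,a) (i,b) * x b))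
            = ∑ i : Fin k, ∑ b : Fin n, star (x a) * (ρ (i,a) (i,b) * x b) :=
          fun a => Finset.sum_comm
        simp only [h1]
        exact Finset.sum_comm
      rw [key]
      have : Nonempty (Fin k) := ⟨⟨0, hk⟩⟩
      apply Finset.sum_pos
      · intro p _
        apply hρ.dotProduct_mulVec_pos
        intro hzero
        apply hx
        ext a
        have := congr_fun hzero (p, a)
        simpa using this
      · exact Finset.univ_nonempty
  have hσ00 : 0 < σ a0 a0 := by
    have h1 := hσPD.dotProduct_mulVec_pos (x := Pi.single a0 1) (by
      intro h
      have := congr_fun h a0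
      simp [Pi.single_apply] at this)
    have h2 : star (Pi.single a0 1 : Fin n → ℂ) ⬝ᵥ σ *ᵥ Pi.single a0 1 = σ a0 a0 := by
      simp [dotProduct, Matrix.mulVec, Pi.single_apply, Finset.sum_ite_eq, mul_comm]
    rwa [h2] at h1
  constructor
  · rintro ⟨G, hCP, hG1, hGtr, hGF⟩
    have hstar := cp_star G hCP
    have hleft : ∀ (B : Matrix (Fin n) (Fin n) ℂ) y,
        G (((1 : Matrix (Fin k) (Fin k) ℂ) ⊗ₖ B) * y) = B * G y := by
      intro B y
      have h1 : ((1 : Matrix (Fin k) (Fin k) ℂ) ⊗ₖ Bᴴ)ᴴ = 1 ⊗ₖ B := by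
        rw [kron_conjT, Matrix.conjTranspose_one, Matrix.conjTranspose_conjTranspose]
      have hx : G (((1 : Matrix (Fin k) (Fin k) ℂ) ⊗ₖ Bᴴ)ᴴ * ((1:Matrix (Fin k) (Fin k) ℂ) ⊗ₖ Bᴴ))
          = (G ((1:Matrix (Fin k) (Fin k) ℂ) ⊗ₖ Bᴴ))ᴴ * G ((1:Matrix (Fin k) (Fin k) ℂ) ⊗ₖ Bᴴ) := by
        rw [h1, ← Matrix.mul_kronecker_mul, Matrix.one_mul, hGF, hGF,
          Matrix.conjTranspose_conjTranspose]
      have h2 := mult_domain G hCP hG1 ((1:Matrix (Fin k) (Fin k) ℂ) ⊗ₖ Bᴴ) hx y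
      rw [h1, hGF, Matrix.conjTranspose_conjTranspose] at h2
      exact h2
    have hright : ∀ (B : Matrix (Fin n) (Fin n) ℂ) y,
        G (y * ((1 : Matrix (Fin k) (Fin k) ℂ) ⊗ₖ B)) = G y * B := by
      intro B y
      have h1 := congrArg Matrix.conjTranspose (hleft Bᴴ yᴴ)
      rw [← hstar, Matrix.conjTranspose_mul, Matrix.conjTranspose_mul,
        Matrix.conjTranspose_conjTranspose, kron_conjT, Matrix.conjTranspose_one,
        Matrix.conjTranspose_conjTranspose, ← hstar, Matrix.conjTranspose_conjTranspose] at h1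
      exact h1
    have hscal : ∀ C : Matrix (Fin k) (Fin k) ℂ,
        G (C ⊗ₖ (1:Matrix (Fin n) (Fin n) ℂ))
          = (G (C ⊗ₖ (1:Matrix (Fin n) (Fin n) ℂ)) a0 a0) • (1:Matrix (Fin n) (Fin n) ℂ) := by
      intro C
      have hBC : ∀ B : Matrix (Fin n) (Fin n) ℂ,
          G (C ⊗ₖ (1:Matrix (Fin n) (Fin n) ℂ)) * B = B * G (C ⊗ₖ 1) := by
        intro B
        have h1 : (C ⊗ₖ (1 : Matrix (Fin n) (Fin n) ℂ)) * ((1 : Matrix (Fin k) (Fin k) ℂ) ⊗ₖ B)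
            = ((1 : Matrix (Fin k) (Fin k) ℂ) ⊗ₖ B) * (C ⊗ₖ 1) := by
          rw [← Matrix.mul_kronecker_mul, ← Matrix.mul_kronecker_mul, Matrix.mul_one,
            Matrix.one_mul, Matrix.mul_one, Matrix.one_mul]
        rw [← hright B (C ⊗ₖ 1), h1, hleft B (C ⊗ₖ 1)]
      obtain ⟨r, hr⟩ := Matrix.mem_range_scalar_iff_commute_single'.mpr
        (fun i j => (hBC _).symm)
      rw [← hr]
      ext a b
      simp [Matrix.scalar_apply, Matrix.diagonal_apply, Matrix.smul_apply, Matrix.one_apply]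
    have hGCB : ∀ (C : Matrix (Fin k) (Fin k) ℂ) (B : Matrix (Fin n) (Fin n) ℂ),
        G (C ⊗ₖ B) = (G (C ⊗ₖ (1:Matrix (Fin n) (Fin n) ℂ)) a0 a0) • B := by
      intro C B
      have h1 : C ⊗ₖ B = (C ⊗ₖ (1:Matrix (Fin n) (Fin n) ℂ)) * ((1:Matrix (Fin k) (Fin k) ℂ) ⊗ₖ B) := by
        rw [← Matrix.mul_kronecker_mul, Matrix.mul_one, Matrix.one_mul]
      rw [h1, hright B (C ⊗ₖ 1), hscal C, Matrix.smul_mul, Matrix.one_mul]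
      simp [Matrix.smul_apply, Matrix.one_apply_eq]
    set τ : Matrix (Fin k) (Fin k) ℂ :=
      Matrix.of fun i j => G ((Matrix.single j i 1) ⊗ₖ (1:Matrix (Fin n) (Fin n) ℂ)) a0 a0 with hτdef
    have hent : ∀ i a j b, ρ (i, a) (j, b) = τ i j * σ a b := by
      intro i a j b
      have h1 := hGtr (Matrix.single j i 1 ⊗ₖ Matrix.single b a 1)
      rw [hGCB, kron_std, trace_mul_std, Matrix.mul_smul, Matrix.trace_smul, trace_mul_std] at h1
      rw [← h1, smul_eq_mul, hτdef]
      rfl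
    have hρeq : ρ = τ ⊗ₖ σ := by
      ext ⟨i, a⟩ ⟨j, b⟩
      rw [hent i a j b, Matrix.kroneckerMap_apply]
    have hτherm : τ.IsHermitian := by
      ext i j
      have h1 := hent i a0 j a0
      have h2 := hent j a0 i a0
      have h3 : star (ρ (j, a0) (i, a0)) = ρ (i, a0) (j, a0) := by
        have := congr_fun (congr_fun hρ.isHermitian.eq (i, a0)) (j, a0)
        rwa [Matrix.conjTranspose_apply] at this
      have hσreal : star (σ a0 a0) = σ a0 a0 := by
        have := hσPD.isHermitian
        have h4 := congr_fun (congr_fun this.eq a0) a0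
        rwa [Matrix.conjTranspose_apply] at h4
      have hσne : σ a0 a0 ≠ 0 := by
        intro h
        rw [h] at hσ00
        exact lt_irrefl 0 hσ00
      rw [Matrix.conjTranspose_apply]
      have h5 : star (τ j i) * σ a0 a0 = τ i j * σ a0 a0 := by
        rw [← hσreal]
        calc star (τ j i) * star (σ a0 a0) = star (τ j i * σ a0 a0) := (star_mul' _ _).symm
        _ = star (ρ (j, a0) (i, a0)) := by rw [← h2]
        _ = ρ (i, a0) (j, a0) := h3
        _ = τ i j * σ a0 a0 := h1
        _ = τ i j * star (σ a0 a0) := by rw [hσreal]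
      exact mul_right_cancel₀ hσne h5
    have hτPD : τ.PosDef := by
      refine Matrix.PosDef.of_dotProduct_mulVec_pos hτherm fun u hu => ?_
      set x : (Fin k × Fin n) → ℂ := fun p => if p.2 = a0 then u p.1 else 0 with hxdef
      have hxne : x ≠ 0 := by
        intro h
        apply hu
        ext i
        have := congr_fun h (i, a0)
        simpa [hxdef] using this
      have hq := hρ.dotProduct_mulVec_pos hxne
      have key : star x ⬝ᵥ ρ *ᵥ x = (star u ⬝ᵥ τ *ᵥ u) * σ a0 a0 := by
        simp only [dotProduct, Matrix.mulVec, Pi.star_apply, Fintype.sum_prod_type, hxdef,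
          apply_ite (star : ℂ → ℂ), star_zero, ite_mul, zero_mul, mul_ite, mul_zero,
          Finset.sum_ite_irrel, Finset.sum_const_zero, Finset.sum_ite_eq,
          Finset.sum_ite_eq', Finset.mem_univ, if_true, Finset.mul_sum, Finset.sum_mul, hent]
        exact Finset.sum_congr rfl fun i _ => Finset.sum_congr rfl fun j _ => by ring
      rw [key] at hq
      exact cpos_of_mul _ _ _ rfl hq hσ00
    refine ⟨τ, hτPD, ?_, hρeq⟩
    -- trace τ = 1
    have hsum : ∑ i, (Matrix.single i i (1:ℂ)) ⊗ₖ (1 : Matrix (Fin n) (Fin n) ℂ)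
        = (1 : Matrix (Fin k) (Fin k) ℂ) ⊗ₖ (1 : Matrix (Fin n) (Fin n) ℂ) := by
      ext ⟨p, x⟩ ⟨q, y⟩
      simp only [Matrix.sum_apply, Matrix.kroneckerMap_apply, Matrix.single,
        Matrix.of_apply, Matrix.one_apply, Prod.ext_iff, ite_and]
      by_cases h : p = q <;> simp [h, Finset.sum_ite_eq]
    calc τ.trace = ∑ i, G (Matrix.single i i 1 ⊗ₖ (1:Matrix (Fin n) (Fin n) ℂ)) a0 a0 := by
          simp [Matrix.trace, Matrix.diag, hτdef]
    _ = G (∑ i, Matrix.single i i 1 ⊗ₖ (1:Matrix (Fin n) (Fin n) ℂ)) a0 a0 := by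
          rw [map_sum, Matrix.sum_apply]
    _ = G ((1:Matrix (Fin k) (Fin k) ℂ) ⊗ₖ (1:Matrix (Fin n) (Fin n) ℂ)) a0 a0 := by rw [hsum]
    _ = 1 := by rw [Matrix.one_kronecker_one, hG1, Matrix.one_apply_eq]
  · rintro ⟨τ, hτPD, hτtr, hρeq⟩
    subst hρeq
    exact ⟨Gtau k n τ, Gtau_isCP k n τ hτPD.posSemidef, Gtau_one k n τ hτtr,
      fun A => Gtau_tr k n τ σ A, fun B => Gtau_kron k n τ hτtr B⟩
end

section
/- Let E : M_{kn}(ℂ) ≅ M_k(ℂ)⊗M_n(ℂ) → M_{kn}(ℂ) be a linear map that maps positive semidefinite matrices to positive semidefinite matrices, whose image is contained in {1_k⊗B : B ∈ M_n(ℂ)}, which satisfies E(1_k⊗B) = 1_k⊗B for all B ∈ M_n(ℂ), and which is left-modular: E((1_k⊗B)A) = (1_k⊗B)E(A) for all A ∈ M_{kn}(ℂ) and B ∈ M_n(ℂ). Then there exists a density matrix τ ∈ M_k(ℂ) such that E(A⊗B) = tr(τA)·(1_k⊗B) for all A ∈ M_k(ℂ) and B ∈ M_n(ℂ); i.e.,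 every conditional expectation onto the type I subfactor 1_k⊗M_n(ℂ) is a partial trace. -/
open Matrix Kronecker ComplexOrder


variable {m : Type*} [Fintype m] [DecidableEq m]

lemma psd_vecMulVec (x : m → ℂ) : (vecMulVec x (star x)).PosSemidef := by
  have h := posSemidef_conjTranspose_mul_self (Matrix.replicateRow Unit (star x))
  have he : vecMulVec x (star x) = (Matrix.replicateRow Unit (star x))ᴴ * Matrix.replicateRow Unit (star x) := by
    ext a b
    simp [vecMulVec, mul_apply, mul_comm]
  rwa [he]

lemma stdBasis_eq_vecMulVec (i j : m) :
    Matrix.single i j (1:ℂ) = vecMulVec (Pi.single i 1) (star (Pi.single j 1)) := by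
  ext a b
  simp only [Matrix.single, vecMulVec, Pi.star_apply, Pi.single_apply, of_apply]
  split_ifs <;> simp_all

lemma polarization (x y : m → ℂ) :
    vecMulVec x (star y) = (4:ℂ)⁻¹ • ∑ s : Fin 4, (-Complex.I)^(s:ℕ) •
      vecMulVec (y + Complex.I^(s:ℕ) • x) (star (y + Complex.I^(s:ℕ) • x)) := by
  ext a b
  simp only [Fin.sum_univ_four, vecMulVec, Matrix.sum_apply, Matrix.smul_apply, Pi.star_apply,
    star_add, Complex.star_def, Pi.add_apply, Pi.smul_apply, smul_eq_mul, Matrix.add_apply, _root_.map_mul, map_add,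
    of_apply, show ((0:Fin 4):ℕ) = 0 from rfl, show ((1:Fin 4):ℕ) = 1 from rfl,
    show ((2:Fin 4):ℕ) = 2 from rfl, show ((3:Fin 4):ℕ) = 3 from rfl,
    pow_zero, pow_one, _root_.map_one, map_pow, Complex.conj_I]
  have h3 : Complex.I ^ 3 = -Complex.I := by
    rw [show (3:ℕ) = 2+1 from rfl, pow_succ, Complex.I_sq]; ring
  have h4 : Complex.I ^ 4 = 1 := by
    rw [show (4:ℕ) = 2*2 from rfl, pow_mul, Complex.I_sq]; norm_num
  have h6 : Complex.I ^ 6 = -1 := by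
    rw [show (6:ℕ) = 2*3 from rfl, pow_mul, Complex.I_sq]; norm_num
  have h9 : Complex.I ^ 9 = Complex.I := by
    rw [show (9:ℕ) = 2*4+1 from rfl, pow_succ, pow_mul, Complex.I_sq]; norm_num
  ring_nf
  rw [h3, h4, h6, h9]
  ring_nf
  rw [Complex.I_sq]
  ring

lemma span_psd (S : Submodule ℂ (Matrix m m ℂ))
    (hS : ∀ A : Matrix m m ℂ, A.PosSemidef → A ∈ S) (A : Matrix m m ℂ) : A ∈ S := by
  have hvv : ∀ x y : m → ℂ, vecMulVec x (star y) ∈ S := by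
    intro x y
    rw [polarization]
    exact S.smul_mem _ (S.sum_mem fun s _ => S.smul_mem _ (hS _ (psd_vecMulVec _)))
  rw [matrix_eq_sum_single A]
  refine S.sum_mem fun i _ => S.sum_mem fun j _ => ?_
  have : Matrix.single i j (A i j) = A i j • Matrix.single i j (1:ℂ) := by
    rw [smul_single, smul_eq_mul, mul_one]
  rw [this, stdBasis_eq_vecMulVec]
  exact S.smul_mem _ (hvv _ _)

lemma stdBasis_conjT (i j : m) : (Matrix.single i j (1:ℂ))ᴴ = Matrix.single j i 1 := by
  ext a b
  simp only [conjTranspose_apply, Matrix.single, of_apply]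
  split_ifs <;> simp_all

/-- Every conditional expectation of `M_{kn}(ℂ) ≅ M_k(ℂ) ⊗ M_n(ℂ)` onto the
type I subfactor `1_k ⊗ M_n(ℂ)` is a partial trace: there is a density matrix
`τ ∈ M_k(ℂ)` with `E(A ⊗ B) = tr(τA) · (1_k ⊗ B)`. -/
theorem stmt_5 (k n : ℕ) (hk : 1 ≤ k) (hn : 1 ≤ n)
    (E : Matrix (Fin k × Fin n) (Fin k × Fin n) ℂ →ₗ[ℂ]
          Matrix (Fin k × Fin n) (Fin k × Fin n) ℂ)
    (hpos : ∀ A : Matrix (Fin k × Fin n) (Fin k × Fin n) ℂ, A.PosSemidef → (E A).PosSemidef)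
    (hrange : ∀ A, ∃ B : Matrix (Fin n) (Fin n) ℂ,
      E A = (1 : Matrix (Fin k) (Fin k) ℂ) ⊗ₖ B)
    (hfix : ∀ B : Matrix (Fin n) (Fin n) ℂ,
      E ((1 : Matrix (Fin k) (Fin k) ℂ) ⊗ₖ B) = (1 : Matrix (Fin k) (Fin k) ℂ) ⊗ₖ B)
    (hmod : ∀ (A : Matrix (Fin k × Fin n) (Fin k × Fin n) ℂ) (B : Matrix (Fin n) (Fin n) ℂ),
      E (((1 : Matrix (Fin k) (Fin k) ℂ) ⊗ₖ B) * A)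
        = ((1 : Matrix (Fin k) (Fin k) ℂ) ⊗ₖ B) * E A) :
    ∃ τ : Matrix (Fin k) (Fin k) ℂ, τ.PosSemidef ∧ τ.trace = 1 ∧
      ∀ (A : Matrix (Fin k) (Fin k) ℂ) (B : Matrix (Fin n) (Fin n) ℂ),
        E (A ⊗ₖ B) = (τ * A).trace • ((1 : Matrix (Fin k) (Fin k) ℂ) ⊗ₖ B) := by
  have i0 : Fin k := ⟨0, hk⟩
  have j0 : Fin n := ⟨0, hn⟩
  -- injectivity of B ↦ 1 ⊗ₖ B
  have inj : ∀ B B' : Matrix (Fin n) (Fin n) ℂ,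
      (1 : Matrix (Fin k) (Fin k) ℂ) ⊗ₖ B = 1 ⊗ₖ B' → B = B' := by
    intro B B' h
    ext p q
    have := congrFun (congrFun h (i0, p)) (i0, q)
    simpa [Matrix.kroneckerMap_apply, Matrix.one_apply] using this
  -- the map φ
  set φ : Matrix (Fin k) (Fin k) ℂ → Matrix (Fin n) (Fin n) ℂ :=
    fun A => (hrange (A ⊗ₖ (1 : Matrix (Fin n) (Fin n) ℂ))).choose with hφdef
  have hφ : ∀ A, E (A ⊗ₖ (1 : Matrix (Fin n) (Fin n) ℂ))
      = (1 : Matrix (Fin k) (Fin k) ℂ) ⊗ₖ φ A := fun A => (hrange _).choose_spec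
  have φadd : ∀ A A', φ (A + A') = φ A + φ A' := by
    intro A A'
    apply inj
    rw [← hφ, add_kronecker, map_add, hφ, hφ, kronecker_add]
  have φsmul : ∀ (r : ℂ) A, φ (r • A) = r • φ A := by
    intro r A
    apply inj
    rw [← hφ, smul_kronecker, LinearMap.map_smul, hφ, kronecker_smul]
  have h2 : ∀ (A : Matrix (Fin k) (Fin k) ℂ) (B : Matrix (Fin n) (Fin n) ℂ),
      E (A ⊗ₖ B) = (1 : Matrix (Fin k) (Fin k) ℂ) ⊗ₖ (B * φ A) := by
    intro A B
    have hAB : A ⊗ₖ B = ((1 : Matrix (Fin k) (Fin k) ℂ) ⊗ₖ B)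
        * (A ⊗ₖ (1 : Matrix (Fin n) (Fin n) ℂ)) := by
      rw [← mul_kronecker_mul, one_mul, mul_one]
    rw [hAB, hmod, hφ, ← mul_kronecker_mul, one_mul]
  -- extraction of PSD
  have extract : ∀ C : Matrix (Fin n) (Fin n) ℂ,
      ((1 : Matrix (Fin k) (Fin k) ℂ) ⊗ₖ C).PosSemidef → C.PosSemidef := by
    intro C h
    have hs := h.submatrix (fun p : Fin n => ((i0, p) : Fin k × Fin n))
    have he : ((1 : Matrix (Fin k) (Fin k) ℂ) ⊗ₖ C).submatrix
        (fun p : Fin n => ((i0, p) : Fin k × Fin n)) (fun p => (i0, p)) = C := by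
      ext p q
      simp [Matrix.kroneckerMap_apply, Matrix.one_apply]
    rwa [he] at hs
  have kronCT : ∀ (X : Matrix (Fin k) (Fin k) ℂ) (Y : Matrix (Fin n) (Fin n) ℂ),
      (X ⊗ₖ Y)ᴴ = Xᴴ ⊗ₖ Yᴴ := by
    intro X Y
    ext ⟨i, p⟩ ⟨j, q⟩
    simp [Matrix.conjTranspose_apply, Matrix.kroneckerMap_apply, mul_comm]
  have kronPSD : ∀ {X : Matrix (Fin k) (Fin k) ℂ} {Y : Matrix (Fin n) (Fin n) ℂ},
      X.PosSemidef → Y.PosSemidef → (X ⊗ₖ Y).PosSemidef := by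
    intro X Y hX hY
    exact hX.kronecker hY
  have φpsd : ∀ {A : Matrix (Fin k) (Fin k) ℂ}, A.PosSemidef → (φ A).PosSemidef := by
    intro A hA
    exact extract _ (hφ A ▸ hpos _ (kronPSD hA Matrix.PosSemidef.one))
  -- φ of a PSD matrix is scalar
  have main : ∀ A : Matrix (Fin k) (Fin k) ℂ, A.PosSemidef →
      ∃ c : ℂ, φ A = c • (1 : Matrix (Fin n) (Fin n) ℂ) := by
    intro A hA
    have comm : ∀ B : Matrix (Fin n) (Fin n) ℂ, φ A * B = B * φ A := by
      intro B
      let S : Submodule ℂ (Matrix (Fin n) (Fin n) ℂ) :=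
        { carrier := {B | φ A * B = B * φ A}
          add_mem' := by
            intro a b ha hb
            simp only [Set.mem_setOf_eq] at *
            rw [mul_add, add_mul, ha, hb]
          zero_mem' := by simp
          smul_mem' := by
            intro r a ha
            simp only [Set.mem_setOf_eq] at *
            rw [mul_smul_comm, smul_mul_assoc, ha] }
      refine span_psd S ?_ B
      intro B hB
      have hEB : ((1 : Matrix (Fin k) (Fin k) ℂ) ⊗ₖ (B * φ A)).PosSemidef :=
        h2 A B ▸ hpos _ (kronPSD hA hB)
      calc φ A * B = (φ A)ᴴ * Bᴴ := by rw [(φpsd hA).isHermitian, hB.isHermitian]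
        _ = (B * φ A)ᴴ := (conjTranspose_mul _ _).symm
        _ = B * φ A := (extract _ hEB).isHermitian
    obtain ⟨c, hc⟩ := mem_range_scalar_of_commute_single
      (M := φ A) (fun i j _ => (comm _).symm)
    refine ⟨c, ?_⟩
    rw [← hc, scalar_apply, smul_one_eq_diagonal]
  -- hence φ is scalar everywhere
  have φscalar : ∀ A : Matrix (Fin k) (Fin k) ℂ,
      ∃ c : ℂ, φ A = c • (1 : Matrix (Fin n) (Fin n) ℂ) := by
    have φzero : φ 0 = 0 := by
      apply inj
      rw [← hφ, zero_kronecker, map_zero]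
      ext ⟨i, p⟩ ⟨j, q⟩
      simp [Matrix.kroneckerMap_apply]
    let S : Submodule ℂ (Matrix (Fin k) (Fin k) ℂ) :=
      { carrier := {A | ∃ c : ℂ, φ A = c • (1 : Matrix (Fin n) (Fin n) ℂ)}
        add_mem' := by
          rintro a b ⟨c, hc⟩ ⟨d, hd⟩
          exact ⟨c + d, by rw [φadd, hc, hd, add_smul]⟩
        zero_mem' := ⟨0, by rw [φzero, zero_smul]⟩
        smul_mem' := by
          rintro r a ⟨c, hc⟩
          exact ⟨r * c, by rw [φsmul, hc, smul_smul]⟩ }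
    exact span_psd S main
  -- the linear functional c
  let cL : Matrix (Fin k) (Fin k) ℂ →ₗ[ℂ] ℂ :=
    { toFun := fun A => φ A j0 j0
      map_add' := by
        intro A A'
        show φ (A + A') j0 j0 = φ A j0 j0 + φ A' j0 j0
        rw [φadd]; rfl
      map_smul' := by
        intro r A
        show φ (r • A) j0 j0 = r * φ A j0 j0
        rw [φsmul]; rfl }
  have hc : ∀ A, φ A = cL A • (1 : Matrix (Fin n) (Fin n) ℂ) := by
    intro A
    obtain ⟨c, hcA⟩ := φscalar A
    have : cL A = c := by
      show φ A j0 j0 = c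
      rw [hcA]
      simp [Matrix.one_apply]
    rw [this, hcA]
  have cE : ∀ (A : Matrix (Fin k) (Fin k) ℂ) (B : Matrix (Fin n) (Fin n) ℂ),
      E (A ⊗ₖ B) = cL A • ((1 : Matrix (Fin k) (Fin k) ℂ) ⊗ₖ B) := by
    intro A B
    rw [h2, hc, mul_smul_comm, mul_one, kronecker_smul]
  have cpos : ∀ {A : Matrix (Fin k) (Fin k) ℂ}, A.PosSemidef → 0 ≤ cL A := by
    intro A hA
    have := (φpsd hA).dotProduct_mulVec_nonneg (Pi.single j0 1)
    show 0 ≤ φ A j0 j0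
    simpa [dotProduct, Matrix.mulVec, Pi.single_apply, Finset.mul_sum, mul_comm] using this
  have cstar : ∀ A : Matrix (Fin k) (Fin k) ℂ, cL Aᴴ = star (cL A) := by
    let S : Submodule ℂ (Matrix (Fin k) (Fin k) ℂ) :=
      { carrier := {A | cL Aᴴ = star (cL A)}
        add_mem' := by
          intro a b ha hb
          simp only [Set.mem_setOf_eq] at *
          rw [conjTranspose_add, map_add, ha, hb, map_add, star_add]
        zero_mem' := by simp
        smul_mem' := by
          intro r a ha
          simp only [Set.mem_setOf_eq] at *
          rw [conjTranspose_smul, cL.map_smul, ha, cL.map_smul, star_smul] }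
    intro A
    refine span_psd S ?_ A
    intro A hA
    show cL Aᴴ = star (cL A)
    rw [hA.isHermitian.eq]
    have h0 := cpos hA
    rw [Complex.nonneg_iff] at h0
    exact (Complex.conj_eq_iff_im.mpr h0.2.symm).symm
  -- the density matrix τ
  set τ : Matrix (Fin k) (Fin k) ℂ :=
    Matrix.of (fun i j : Fin k => cL (Matrix.single j i 1)) with hτdef
  have hτapp : ∀ i j : Fin k, τ i j = cL (Matrix.single j i 1) := fun _ _ => rfl
  have ctrace : ∀ A : Matrix (Fin k) (Fin k) ℂ, (τ * A).trace = cL A := by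
    intro A
    have hterm : ∀ i j : Fin k, cL (Matrix.single i j (A i j)) = τ j i * A i j := by
      intro i j
      have hs : Matrix.single i j (A i j) = A i j • Matrix.single i j (1:ℂ) := by
        rw [smul_single, smul_eq_mul, mul_one]
      rw [hs, cL.map_smul, smul_eq_mul, hτapp, mul_comm]
    conv_rhs => rw [matrix_eq_sum_single A]
    rw [map_sum]
    simp only [map_sum, hterm]
    simp only [Matrix.trace, Matrix.diag, Matrix.mul_apply]
    exact Finset.sum_comm
  have hτherm : τ.IsHermitian := by
    ext i j
    rw [Matrix.conjTranspose_apply, hτapp, hτapp, ← stdBasis_conjT i j, cstar]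
  have hτpsd : τ.PosSemidef := by
    refine .of_dotProduct_mulVec_nonneg hτherm fun x => ?_
    have key : star x ⬝ᵥ τ *ᵥ x = (τ * vecMulVec x (star x)).trace := by
      simp only [dotProduct, Matrix.mulVec, Matrix.trace, Matrix.diag, Matrix.mul_apply,
        vecMulVec, of_apply, Pi.star_apply, Finset.mul_sum]
      exact Finset.sum_congr rfl fun i _ => Finset.sum_congr rfl fun j _ => by ring
    rw [key, ctrace]
    exact cpos (psd_vecMulVec x)
  have hτtr : τ.trace = 1 := by
    have h1 : φ (1 : Matrix (Fin k) (Fin k) ℂ) = 1 := by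
      apply inj
      rw [← hφ, hfix]
    have : (τ * 1).trace = cL 1 := ctrace 1
    rw [mul_one] at this
    rw [this]
    show φ (1 : Matrix (Fin k) (Fin k) ℂ) j0 j0 = 1
    rw [h1, Matrix.one_apply_eq]
  exact ⟨τ, hτpsd, hτtr, fun A B => by rw [ctrace, cE]⟩
end

section
/- Let F : M_n(ℂ) → M_m(ℂ) be a linear unital map satisfying the Kadison–Schwarz inequality F(B)*F(B) ≤ F(B*B) in the Loewner order for all B ∈ M_n(ℂ) (this holds in particular for any UCP map). Let σ ∈ M_n(ℂ) and ρ ∈ M_m(ℂ) be density matrices with tr(ρF(B)) = tr(σB) for all B, and let Q, R be the support projections of σ and ρ respectively. Then: (a) for every B ∈ M_n(ℂ), tr(σB*B) = 0 implies tr(ρF(B)*F(B)) = 0; (b) F(1 − Q) ≤ 1 − R in the Loewner order; (c) R·F(Q)·R = R. -/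
open Matrix ComplexOrder

/-- `P` is the support projection of `σ`: the orthogonal projection (Hermitian idempotent)
whose range equals the range of `σ`. -/
def IsSupportProj {n : Type*} [Fintype n] [DecidableEq n] (P σ : Matrix n n ℂ) : Prop :=
  P.IsHermitian ∧ P * P = P ∧ LinearMap.range P.mulVecLin = LinearMap.range σ.mulVecLin

section Helpers

variable {k : Type*} [Fintype k] [DecidableEq k]

noncomputable def Matrix.PosSemidef.sqrt {A : Matrix k k ℂ} (_hA : A.PosSemidef) : Matrix k k ℂ := by
  open scoped MatrixOrder in exact CFC.sqrt A

lemma Matrix.PosSemidef.posSemidef_sqrt {A : Matrix k k ℂ} (hA : A.PosSemidef) :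
    hA.sqrt.PosSemidef := by
  open scoped MatrixOrder in exact (CFC.sqrt_nonneg A).posSemidef

lemma Matrix.PosSemidef.sqrt_mul_self {A : Matrix k k ℂ} (hA : A.PosSemidef) :
    hA.sqrt * hA.sqrt = A := by
  open scoped MatrixOrder in exact CFC.sqrt_mul_sqrt_self A hA.nonneg

lemma myDiag_nonneg {A : Matrix k k ℂ} (hA : A.PosSemidef) (i : k) : 0 ≤ A i i := by
  exact hA.diag_nonneg

lemma myTrace_nonneg {A : Matrix k k ℂ} (hA : A.PosSemidef) : 0 ≤ A.trace :=
  Finset.sum_nonneg fun i _ => myDiag_nonneg hA i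

lemma myTrace_mul_nonneg {A B : Matrix k k ℂ} (hA : A.PosSemidef) (hB : B.PosSemidef) :
    0 ≤ (A * B).trace := by
  have hps := hB.conjTranspose_mul_mul_same hA.sqrt
  rw [hA.posSemidef_sqrt.1.eq] at hps
  have : (A * B).trace = (hA.sqrt * B * hA.sqrt).trace := by
    rw [Matrix.trace_mul_cycle, hA.sqrt_mul_self]
  rw [this]
  exact myTrace_nonneg hps

lemma myTrace_CT_self_zero {A : Matrix k k ℂ} (h : (Aᴴ * A).trace = 0) : A = 0 := by
  have hps := Matrix.posSemidef_conjTranspose_mul_self A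
  have hdiag : ∀ i, (Aᴴ * A) i i = 0 := by
    intro i
    have := (Finset.sum_eq_zero_iff_of_nonneg (fun i _ => myDiag_nonneg hps i)).mp h
    exact this i (Finset.mem_univ i)
  ext i j
  have : star (fun r => A r j) ⬝ᵥ (fun r => A r j) = 0 := by
    have := hdiag j
    simpa [Matrix.mul_apply, dotProduct, conjTranspose_apply] using this
  exact congrFun (dotProduct_star_self_eq_zero.mp this) i

lemma myMul_eq_zero_of_trace {A B : Matrix k k ℂ} (hA : A.PosSemidef) (hB : B.PosSemidef)
    (h : (A * B).trace = 0) : A * B = 0 := by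
  set S := hA.sqrt with hS
  set T := hB.sqrt with hT
  have hSS : S * S = A := hA.sqrt_mul_self
  have hTT : T * T = B := hB.sqrt_mul_self
  have hST : S * T = 0 := by
    apply myTrace_CT_self_zero
    have : (S * T)ᴴ = T * S := by
      rw [conjTranspose_mul, hA.posSemidef_sqrt.1.eq, hB.posSemidef_sqrt.1.eq]
    rw [this]
    calc (T * S * (S * T)).trace = (S * T * (T * S)).trace := Matrix.trace_mul_comm _ _
      _ = (S * B * S).trace := by
          rw [Matrix.mul_assoc, ← Matrix.mul_assoc T, hTT, ← Matrix.mul_assoc]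
      _ = (A * B).trace := by rw [Matrix.trace_mul_cycle, hSS]
      _ = 0 := h
  calc A * B = S * (S * T) * T := by rw [← Matrix.mul_assoc, Matrix.mul_assoc (S*S), ← Matrix.mul_assoc, hSS, Matrix.mul_assoc, hTT]
    _ = 0 := by rw [hST, Matrix.mul_zero, Matrix.zero_mul]

lemma myExt_mulVec {A B : Matrix k k ℂ} (h : ∀ x, A *ᵥ x = B *ᵥ x) : A = B := by
  ext i j
  have := congrFun (h (Pi.single j 1)) i
  simpa [mulVec_single] using this

lemma mySupp_mul {P σ : Matrix k k ℂ} (h : IsSupportProj P σ) : P * σ = σ := by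
  apply myExt_mulVec
  intro x
  have hmem : σ *ᵥ x ∈ LinearMap.range P.mulVecLin := by
    rw [h.2.2]; exact ⟨x, rfl⟩
  obtain ⟨y, hy⟩ := hmem
  rw [← Matrix.mulVec_mulVec, ← hy]
  show P *ᵥ (P.mulVecLin y) = P.mulVecLin y
  simp only [Matrix.mulVecLin_apply, Matrix.mulVec_mulVec, h.2.1]

lemma myKer {P ρ : Matrix k k ℂ} (hρ : ρ.PosSemidef) (h : IsSupportProj P ρ)
    {x : k → ℂ} (hx : ρ *ᵥ x = 0) : P *ᵥ x = 0 := by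
  have hmem : P *ᵥ x ∈ LinearMap.range ρ.mulVecLin := by
    rw [← h.2.2]; exact ⟨x, rfl⟩
  obtain ⟨z, hz⟩ := hmem
  rw [Matrix.mulVecLin_apply] at hz
  apply dotProduct_star_self_eq_zero.mp
  have e1 : star (P *ᵥ x) ⬝ᵥ (P *ᵥ x) = star x ⬝ᵥ (P *ᵥ (P *ᵥ x)) := by
    rw [star_mulVec, h.1.eq, ← dotProduct_mulVec]
  rw [e1, Matrix.mulVec_mulVec, h.2.1, ← hz, dotProduct_mulVec]
  have e2 : star x ᵥ* ρ = 0 := by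
    have h3 : star (ρ *ᵥ x) = star x ᵥ* ρ := by rw [star_mulVec, hρ.1.eq]
    rw [← h3, hx]
    simp
  rw [e2, zero_dotProduct]

end Helpers

/-- For a unital Kadison–Schwarz map `F : M_n(ℂ) → M_m(ℂ)` and density
matrices `σ`, `ρ` with `tr(ρ F(B)) = tr(σ B)` for all `B`, with support projections
`Q`, `R` respectively: (a) `tr(σ B*B) = 0` implies `tr(ρ F(B)* F(B)) = 0`;
(b) `F(1 − Q) ≤ 1 − R` in the Loewner order; (c) `R · F(Q) · R = R`. -/
theorem stmt_6 (n m : ℕ)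
    (F : Matrix (Fin n) (Fin n) ℂ →ₗ[ℂ] Matrix (Fin m) (Fin m) ℂ)
    (hFunital : F 1 = 1)
    (hKS : ∀ B : Matrix (Fin n) (Fin n) ℂ, (F (Bᴴ * B) - (F B)ᴴ * F B).PosSemidef)
    (σ : Matrix (Fin n) (Fin n) ℂ) (hσ : σ.PosSemidef) (hσtr : σ.trace = 1)
    (ρ : Matrix (Fin m) (Fin m) ℂ) (hρ : ρ.PosSemidef) (hρtr : ρ.trace = 1)
    (hpres : ∀ B : Matrix (Fin n) (Fin n) ℂ, (ρ * F B).trace = (σ * B).trace)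
    (Q : Matrix (Fin n) (Fin n) ℂ) (hQ : IsSupportProj Q σ)
    (R : Matrix (Fin m) (Fin m) ℂ) (hR : IsSupportProj R ρ) :
    (∀ B : Matrix (Fin n) (Fin n) ℂ,
        (σ * (Bᴴ * B)).trace = 0 → (ρ * ((F B)ᴴ * F B)).trace = 0) ∧
    ((1 - R) - F (1 - Q)).PosSemidef ∧
    R * F Q * R = R := by
  -- basic facts
  have hQσ : Q * σ = σ := mySupp_mul hQ
  have hσQ : σ * Q = σ := by
    have := congrArg conjTranspose hQσ
    rwa [conjTranspose_mul, hQ.1.eq, hσ.1.eq] at this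
  -- part (a)
  have parta : ∀ B : Matrix (Fin n) (Fin n) ℂ,
      (σ * (Bᴴ * B)).trace = 0 → (ρ * ((F B)ᴴ * F B)).trace = 0 := by
    intro B hB
    have hD := hKS B
    have hFB : ((F B)ᴴ * F B).PosSemidef := Matrix.posSemidef_conjTranspose_mul_self _
    have h1 : 0 ≤ (ρ * ((F B)ᴴ * F B)).trace := myTrace_mul_nonneg hρ hFB
    have h2 : 0 ≤ (ρ * (F (Bᴴ * B) - (F B)ᴴ * F B)).trace := myTrace_mul_nonneg hρ hD
    have e : (ρ * ((F B)ᴴ * F B)).trace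
        = (σ * (Bᴴ * B)).trace - (ρ * (F (Bᴴ * B) - (F B)ᴴ * F B)).trace := by
      rw [← hpres, Matrix.mul_sub, Matrix.trace_sub]
      ring
    rw [e, hB, zero_sub] at h1 ⊢
    have := le_antisymm (neg_nonpos.mpr h2) h1
    rw [← this]
  -- setup for (b), (c)
  set Y := F (1 - Q) with hYdef
  have hP2 : (1 - Q)ᴴ * (1 - Q) = 1 - Q := by
    simp only [conjTranspose_sub, conjTranspose_one, hQ.1.eq, Matrix.sub_mul,
      Matrix.mul_sub, Matrix.mul_one, Matrix.one_mul, hQ.2.1]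
    abel
  have hD : (Y - Yᴴ * Y).PosSemidef := by
    have := hKS (1 - Q)
    rwa [hP2] at this
  have hYpsd : Y.PosSemidef := by
    have := hD.add (Matrix.posSemidef_conjTranspose_mul_self Y)
    rwa [sub_add_cancel] at this
  have htrρY : (ρ * Y).trace = 0 := by
    rw [hYdef, hpres, Matrix.mul_sub, Matrix.mul_one, hσQ, sub_self, Matrix.trace_zero]
  have hρY : ρ * Y = 0 := myMul_eq_zero_of_trace hρ hYpsd htrρY
  have hRY : R * Y = 0 := by
    apply myExt_mulVec
    intro x
    rw [← Matrix.mulVec_mulVec]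
    have : ρ *ᵥ (Y *ᵥ x) = 0 := by rw [Matrix.mulVec_mulVec, hρY, Matrix.zero_mulVec]
    rw [myKer hρ hR this, Matrix.zero_mulVec]
  have hYR : Y * R = 0 := by
    have := congrArg conjTranspose hRY
    rwa [conjTranspose_mul, hR.1.eq, hYpsd.1.eq, conjTranspose_zero] at this
  -- part (c)
  have hY1FQ : Y = 1 - F Q := by rw [hYdef, map_sub, hFunital]
  have hRFQ : R * F Q = R := by
    have := hRY
    rw [hY1FQ, Matrix.mul_sub, Matrix.mul_one, sub_eq_zero] at this
    exact this.symm
  have partc : R * F Q * R = R := by rw [hRFQ, hR.2.1]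
  -- part (b)
  have h1Y : (1 - Y).PosSemidef := by
    have hadd := (Matrix.posSemidef_conjTranspose_mul_self (1 - Y)).add hD
    have e : (1 - Y)ᴴ * (1 - Y) + (Y - Yᴴ * Y) = 1 - Y := by
      simp only [conjTranspose_sub, conjTranspose_one, hYpsd.1.eq, Matrix.sub_mul,
        Matrix.mul_sub, Matrix.one_mul, Matrix.mul_one]
      abel
    rwa [e] at hadd
  have partb : ((1 - R) - Y).PosSemidef := by
    have hps := h1Y.conjTranspose_mul_mul_same (1 - R)
    have hRH : (1 - R)ᴴ = 1 - R := by rw [conjTranspose_sub, conjTranspose_one, hR.1.eq]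
    rw [hRH] at hps
    have e : (1 - R) * (1 - Y) * (1 - R) = (1 - R) - Y := by
      simp only [Matrix.mul_sub, Matrix.sub_mul, Matrix.mul_one, Matrix.one_mul,
        hYR, hRY, hR.2.1, sub_zero]
      abel
    rwa [e] at hps
  exact ⟨parta, partb, partc⟩
end

section
/- Let F : M_n(ℂ) → M_m(ℂ) be a UCP map, and let σ ∈ M_n(ℂ), ρ ∈ M_m(ℂ) be positive definite density matrices with tr(ρF(B)) = tr(σB) for all B ∈ M_n(ℂ). Then the following are equivalent: (a) F(σB)ρ = ρF(Bσ) for all B ∈ M_n(ℂ); (b) F(σ^{it} B σ^{-it}) = ρ^{it} F(B) ρ^{-it} for all B ∈ M_n(ℂ) and all t ∈ ℝ (the Accardi–Cecchini intertwining condition for the modular groups). -/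
open Matrix ComplexOrder

section Stmt7Helpers

variable {A : Type*} [Monoid A]

lemma stmt7_conj_mul_right (w w' : A) (h : w' * w = 1) (X D : A) :
    (w' * X * w) * D = w' * (X * (w * D * w')) * w := by
  simp only [← mul_assoc]
  rw [mul_assoc (w' * X * w * D) w' w, h, mul_one]

lemma stmt7_conj_mul_left (w w' : A) (h : w' * w = 1) (X D : A) :
    D * (w' * X * w) = w' * ((w * D * w') * X) * w := by
  simp only [← mul_assoc]
  rw [h, one_mul]

lemma stmt7_conj_both (w w' : A) (h : w' * w = 1) (D X D' : A) :
    w' * ((w * D * w') * X * (w * D' * w')) * w = D * (w' * X * w) * D' := by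
  simp only [← mul_assoc]
  rw [h, one_mul, mul_assoc (D * w' * X * w * D') w' w, h, mul_one]

lemma stmt7_conj_mul_mul (w w' : A) (h : w' * w = 1) (X Y : A) :
    (w * X * w') * (w * Y * w') = w * (X * Y) * w' := by
  simp only [← mul_assoc]
  rw [mul_assoc (w * X) w' w, h, mul_one]

lemma stmt7_conj_conj (w w' : A) (h : w' * w = 1) (X : A) :
    w' * (w * X * w') * w = X := by
  simp only [← mul_assoc]
  rw [h, one_mul, mul_assoc X w' w, h, mul_one]

lemma stmt7_conj_inj (w w' : A) (h1 : w' * w = 1) (h2 : w * w' = 1) {X Y : A}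
    (hxy : w' * X * w = w' * Y * w) : X = Y := by
  have h3 := congrArg (fun Z => w * Z * w') hxy
  simpa only [stmt7_conj_conj w' w h2] using h3

end Stmt7Helpers

lemma stmt7_diag_mul_std {n : ℕ} (f : Fin n → ℂ) (a b : Fin n) :
    diagonal f * single a b (1 : ℂ) = f a • single a b 1 := by
  ext i j
  simp only [Matrix.diagonal_mul, Matrix.smul_apply, smul_eq_mul, Matrix.single,
    Matrix.of_apply]
  split_ifs with h
  · obtain ⟨rfl, rfl⟩ := h; rfl
  · ring

lemma stmt7_std_mul_diag {n : ℕ} (g : Fin n → ℂ) (a b : Fin n) :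
    single a b (1 : ℂ) * diagonal g = g b • single a b 1 := by
  ext i j
  simp only [Matrix.mul_diagonal, Matrix.smul_apply, smul_eq_mul, Matrix.single,
    Matrix.of_apply]
  split_ifs with h
  · obtain ⟨rfl, rfl⟩ := h; ring
  · ring

lemma stmt7_dsd {n : ℕ} (f g : Fin n → ℂ) (a b : Fin n) :
    diagonal f * single a b (1 : ℂ) * diagonal g = (f a * g b) • single a b 1 := by
  rw [stmt7_diag_mul_std, Matrix.smul_mul, stmt7_std_mul_diag, smul_smul]

lemma stmt7_exp_cfc {k : ℕ} {A : Matrix (Fin k) (Fin k) ℂ} (hA : A.IsHermitian) (c : ℂ) :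
    NormedSpace.exp (c • hA.cfc Real.log)
      = (hA.eigenvectorUnitary : Matrix (Fin k) (Fin k) ℂ)
          * diagonal (fun i => Complex.exp (c * (Real.log (hA.eigenvalues i) : ℂ)))
          * star (hA.eigenvectorUnitary : Matrix (Fin k) (Fin k) ℂ) := by
  have h1 : star (hA.eigenvectorUnitary : Matrix (Fin k) (Fin k) ℂ) *
      (hA.eigenvectorUnitary : Matrix (Fin k) (Fin k) ℂ) = 1 :=
    Matrix.mem_unitaryGroup_iff'.mp hA.eigenvectorUnitary.2
  have h2 : (hA.eigenvectorUnitary : Matrix (Fin k) (Fin k) ℂ) *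
      star (hA.eigenvectorUnitary : Matrix (Fin k) (Fin k) ℂ) = 1 :=
    Matrix.mem_unitaryGroup_iff.mp hA.eigenvectorUnitary.2
  have hsmul : c • hA.cfc Real.log
      = (hA.eigenvectorUnitary : Matrix (Fin k) (Fin k) ℂ)
          * diagonal (fun i => c * (Real.log (hA.eigenvalues i) : ℂ))
          * star (hA.eigenvectorUnitary : Matrix (Fin k) (Fin k) ℂ) := by
    have hfun : (c • (RCLike.ofReal ∘ Real.log ∘ hA.eigenvalues) : Fin k → ℂ)
        = fun i => c * (Real.log (hA.eigenvalues i) : ℂ) := by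
      funext i
      simp [Function.comp, Pi.smul_apply, smul_eq_mul]
    rw [Matrix.IsHermitian.cfc, Unitary.conjStarAlgAut_apply, ← smul_mul_assoc, ← mul_smul_comm, ← Matrix.diagonal_smul, hfun]
  rw [hsmul]
  have h3 := Matrix.exp_units_conj
      (⟨(hA.eigenvectorUnitary : Matrix (Fin k) (Fin k) ℂ),
        star (hA.eigenvectorUnitary : Matrix (Fin k) (Fin k) ℂ), h2, h1⟩ :
        (Matrix (Fin k) (Fin k) ℂ)ˣ)
      (diagonal (fun i => c * (Real.log (hA.eigenvalues i) : ℂ)))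
  refine h3.trans ?_
  rw [Matrix.exp_diagonal, Pi.exp_def]
  rw [← Complex.exp_eq_exp_ℂ]
  rfl

lemma stmt7_core {n m : ℕ}
    (H : Matrix (Fin n) (Fin n) ℂ →ₗ[ℂ] Matrix (Fin m) (Fin m) ℂ)
    (d : Fin n → ℝ) (e : Fin m → ℝ) (hd : ∀ a, 0 < d a) (he : ∀ p, 0 < e p) :
    (∀ C, H (diagonal (fun a => ((d a : ℝ) : ℂ)) * C) * diagonal (fun p => ((e p : ℝ) : ℂ))
        = diagonal (fun p => ((e p : ℝ) : ℂ)) * H (C * diagonal (fun a => ((d a : ℝ) : ℂ)))) ↔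
    (∀ (C : Matrix (Fin n) (Fin n) ℂ) (t : ℝ),
      H (diagonal (fun a => Complex.exp (Complex.I * (t : ℂ) * (Real.log (d a) : ℂ))) * C *
         diagonal (fun a => Complex.exp (-(Complex.I * (t : ℂ)) * (Real.log (d a) : ℂ))))
        = diagonal (fun p => Complex.exp (Complex.I * (t : ℂ) * (Real.log (e p) : ℂ))) * H C *
          diagonal (fun p => Complex.exp (-(Complex.I * (t : ℂ)) * (Real.log (e p) : ℂ)))) := by
  have hexp : ∀ (C : Matrix (Fin n) (Fin n) ℂ) (p q : Fin m),
      H C p q = ∑ a, ∑ b, C a b * H (single a b 1) p q := by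
    intro C p q
    have hC : C = ∑ a, ∑ b, C a b • single a b (1 : ℂ) := by
      conv_lhs => rw [matrix_eq_sum_single C]
      refine Finset.sum_congr rfl fun a _ => Finset.sum_congr rfl fun b _ => ?_
      rw [smul_single, smul_eq_mul, mul_one]
    conv_lhs => rw [hC]
    simp only [map_sum, _root_.map_smul, Matrix.sum_apply, Matrix.smul_apply, smul_eq_mul]
  have key_of_left :
      (∀ C, H (diagonal (fun a => ((d a : ℝ) : ℂ)) * C) * diagonal (fun p => ((e p : ℝ) : ℂ))
        = diagonal (fun p => ((e p : ℝ) : ℂ)) * H (C * diagonal (fun a => ((d a : ℝ) : ℂ)))) →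
      ∀ a b p q, H (single a b 1) p q ≠ 0 → d a * e q = d b * e p := by
    intro h a b p q hne
    have h1 := Matrix.ext_iff.mpr (h (single a b 1)) p q
    rw [stmt7_diag_mul_std, stmt7_std_mul_diag, _root_.map_smul, _root_.map_smul, Matrix.smul_mul,
      Matrix.mul_smul] at h1
    simp only [Matrix.smul_apply, Matrix.mul_diagonal, Matrix.diagonal_mul, smul_eq_mul] at h1
    have h2 : (((d a : ℝ) : ℂ) * ((e q : ℝ) : ℂ)) * H (single a b 1) p q
        = (((d b : ℝ) : ℂ) * ((e p : ℝ) : ℂ)) * H (single a b 1) p q := by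
      linear_combination h1
    have h3 := mul_right_cancel₀ hne h2
    exact_mod_cast h3
  have key_of_right :
      (∀ (C : Matrix (Fin n) (Fin n) ℂ) (t : ℝ),
        H (diagonal (fun a => Complex.exp (Complex.I * (t : ℂ) * (Real.log (d a) : ℂ))) * C *
           diagonal (fun a => Complex.exp (-(Complex.I * (t : ℂ)) * (Real.log (d a) : ℂ))))
          = diagonal (fun p => Complex.exp (Complex.I * (t : ℂ) * (Real.log (e p) : ℂ))) * H C *
            diagonal (fun p => Complex.exp (-(Complex.I * (t : ℂ)) * (Real.log (e p) : ℂ)))) →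
      ∀ a b p q, H (single a b 1) p q ≠ 0 → d a * e q = d b * e p := by
    intro h a b p q hne
    by_contra hne2
    have hα : Real.log (d a) + Real.log (e q) ≠ Real.log (d b) + Real.log (e p) := by
      intro hc
      apply hne2
      have h4 := congrArg Real.exp hc
      rwa [Real.exp_add, Real.exp_add, Real.exp_log (hd a), Real.exp_log (he q),
        Real.exp_log (hd b), Real.exp_log (he p)] at h4
    set γ : ℝ := (Real.log (d a) + Real.log (e q)) - (Real.log (d b) + Real.log (e p)) with hγ
    have hγne : γ ≠ 0 := sub_ne_zero.mpr hα
    set t : ℝ := Real.pi / γ with ht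
    have h1 := Matrix.ext_iff.mpr (h (single a b 1) t) p q
    rw [stmt7_dsd, _root_.map_smul] at h1
    simp only [Matrix.smul_apply, smul_eq_mul, Matrix.mul_diagonal, Matrix.diagonal_mul] at h1
    have hx : Complex.exp (Complex.I * (t : ℂ) * (Real.log (d a) : ℂ)
          + -(Complex.I * (t : ℂ)) * (Real.log (d b) : ℂ))
        = Complex.exp (Complex.I * (t : ℂ) * (Real.log (d a) : ℂ)) *
          Complex.exp (-(Complex.I * (t : ℂ)) * (Real.log (d b) : ℂ)) := Complex.exp_add _ _
    have hy : Complex.exp (Complex.I * (t : ℂ) * (Real.log (e p) : ℂ)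
          + -(Complex.I * (t : ℂ)) * (Real.log (e q) : ℂ))
        = Complex.exp (Complex.I * (t : ℂ) * (Real.log (e p) : ℂ)) *
          Complex.exp (-(Complex.I * (t : ℂ)) * (Real.log (e q) : ℂ)) := Complex.exp_add _ _
    have h2 : Complex.exp (Complex.I * (t : ℂ) * (Real.log (d a) : ℂ)
          + -(Complex.I * (t : ℂ)) * (Real.log (d b) : ℂ)) * H (single a b 1) p q
        = Complex.exp (Complex.I * (t : ℂ) * (Real.log (e p) : ℂ)
          + -(Complex.I * (t : ℂ)) * (Real.log (e q) : ℂ)) * H (single a b 1) p q := by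
      rw [hx, hy]
      linear_combination h1
    have h3 := mul_right_cancel₀ hne h2
    have htγ : (t : ℝ) * γ = Real.pi := by
      rw [ht]; field_simp
    rw [hγ] at htγ
    have htγC : (t : ℂ) * (((Real.log (d a) : ℝ) : ℂ) + ((Real.log (e q) : ℝ) : ℂ)
        - ((Real.log (d b) : ℝ) : ℂ) - ((Real.log (e p) : ℝ) : ℂ)) = ((Real.pi : ℝ) : ℂ) := by
      have : (t : ℝ) * (Real.log (d a) + Real.log (e q) - Real.log (d b) - Real.log (e p))
          = Real.pi := by linarith [htγ]
      exact_mod_cast this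
    have hXY : Complex.I * (t : ℂ) * (Real.log (d a) : ℂ)
          + -(Complex.I * (t : ℂ)) * (Real.log (d b) : ℂ)
        = (Complex.I * (t : ℂ) * (Real.log (e p) : ℂ)
          + -(Complex.I * (t : ℂ)) * (Real.log (e q) : ℂ)) + (Real.pi : ℂ) * Complex.I := by
      linear_combination Complex.I * htγC
    rw [hXY, Complex.exp_add, Complex.exp_pi_mul_I] at h3
    exact Complex.exp_ne_zero _ (by linear_combination (-1/2 : ℂ) * h3)
  have left_of_key :
      (∀ a b p q, H (single a b 1) p q ≠ 0 → d a * e q = d b * e p) →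
      (∀ C, H (diagonal (fun a => ((d a : ℝ) : ℂ)) * C) * diagonal (fun p => ((e p : ℝ) : ℂ))
        = diagonal (fun p => ((e p : ℝ) : ℂ)) * H (C * diagonal (fun a => ((d a : ℝ) : ℂ)))) := by
    intro key C
    ext p q
    rw [Matrix.mul_diagonal, Matrix.diagonal_mul, hexp, hexp]
    rw [Finset.sum_mul, Finset.mul_sum]
    refine Finset.sum_congr rfl fun a _ => ?_
    rw [Finset.sum_mul, Finset.mul_sum]
    refine Finset.sum_congr rfl fun b _ => ?_
    rw [Matrix.diagonal_mul, Matrix.mul_diagonal]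
    by_cases hne : H (single a b 1) p q = 0
    · rw [hne]; ring
    · have h4 : ((d a : ℝ) : ℂ) * ((e q : ℝ) : ℂ) = ((d b : ℝ) : ℂ) * ((e p : ℝ) : ℂ) := by
        exact_mod_cast key a b p q hne
      linear_combination (C a b * H (single a b 1) p q) * h4
  have right_of_key :
      (∀ a b p q, H (single a b 1) p q ≠ 0 → d a * e q = d b * e p) →
      (∀ (C : Matrix (Fin n) (Fin n) ℂ) (t : ℝ),
        H (diagonal (fun a => Complex.exp (Complex.I * (t : ℂ) * (Real.log (d a) : ℂ))) * C *
           diagonal (fun a => Complex.exp (-(Complex.I * (t : ℂ)) * (Real.log (d a) : ℂ))))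
          = diagonal (fun p => Complex.exp (Complex.I * (t : ℂ) * (Real.log (e p) : ℂ))) * H C *
            diagonal (fun p => Complex.exp (-(Complex.I * (t : ℂ)) * (Real.log (e p) : ℂ)))) := by
    intro key C t
    ext p q
    rw [Matrix.mul_diagonal, Matrix.diagonal_mul, hexp, hexp]
    rw [Finset.mul_sum, Finset.sum_mul]
    refine Finset.sum_congr rfl fun a _ => ?_
    rw [Finset.mul_sum, Finset.sum_mul]
    refine Finset.sum_congr rfl fun b _ => ?_
    rw [Matrix.mul_diagonal, Matrix.diagonal_mul]
    by_cases hne : H (single a b 1) p q = 0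
    · rw [hne]; ring
    · have hkey := key a b p q hne
      have hlog : Real.log (d a) + Real.log (e q) = Real.log (d b) + Real.log (e p) := by
        have h5 := congrArg Real.log hkey
        rwa [Real.log_mul (hd a).ne' (he q).ne', Real.log_mul (hd b).ne' (he p).ne'] at h5
      have hlogC : ((Real.log (d a) : ℝ) : ℂ) + ((Real.log (e q) : ℝ) : ℂ)
          = ((Real.log (d b) : ℝ) : ℂ) + ((Real.log (e p) : ℝ) : ℂ) := by exact_mod_cast hlog
      have hfg : Complex.exp (Complex.I * (t : ℂ) * (Real.log (d a) : ℂ)) *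
            Complex.exp (-(Complex.I * (t : ℂ)) * (Real.log (d b) : ℂ))
          = Complex.exp (Complex.I * (t : ℂ) * (Real.log (e p) : ℂ)) *
            Complex.exp (-(Complex.I * (t : ℂ)) * (Real.log (e q) : ℂ)) := by
        rw [← Complex.exp_add, ← Complex.exp_add]
        congr 1
        linear_combination Complex.I * (t : ℂ) * hlogC
      linear_combination (C a b * H (single a b 1) p q) * hfg
  constructor
  · intro h; exact right_of_key (key_of_left h)
  · intro h; exact left_of_key (key_of_right h)

lemma stmt7_main {n m : ℕ}
    (F : Matrix (Fin n) (Fin n) ℂ →ₗ[ℂ] Matrix (Fin m) (Fin m) ℂ)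
    (σ : Matrix (Fin n) (Fin n) ℂ) (ρ : Matrix (Fin m) (Fin m) ℂ)
    (Lσ : Matrix (Fin n) (Fin n) ℂ) (Lρ : Matrix (Fin m) (Fin m) ℂ)
    (u : Matrix (Fin n) (Fin n) ℂ) (v : Matrix (Fin m) (Fin m) ℂ)
    (d : Fin n → ℝ) (e : Fin m → ℝ)
    (hu1 : star u * u = 1) (hu2 : u * star u = 1)
    (hv1 : star v * v = 1) (hv2 : v * star v = 1)
    (hd : ∀ a, 0 < d a) (he : ∀ p, 0 < e p)
    (hσspec : σ = u * diagonal (fun a => ((d a : ℝ) : ℂ)) * star u)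
    (hρspec : ρ = v * diagonal (fun p => ((e p : ℝ) : ℂ)) * star v)
    (hexpσ : ∀ c : ℂ, NormedSpace.exp (c • Lσ)
      = u * diagonal (fun a => Complex.exp (c * (Real.log (d a) : ℂ))) * star u)
    (hexpρ : ∀ c : ℂ, NormedSpace.exp (c • Lρ)
      = v * diagonal (fun p => Complex.exp (c * (Real.log (e p) : ℂ))) * star v) :
    (∀ B : Matrix (Fin n) (Fin n) ℂ, F (σ * B) * ρ = ρ * F (B * σ)) ↔
    (∀ (B : Matrix (Fin n) (Fin n) ℂ) (t : ℝ),
      F (NormedSpace.exp ((Complex.I * (t : ℂ)) • Lσ) * B *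
         NormedSpace.exp ((-(Complex.I * (t : ℂ))) • Lσ))
        = NormedSpace.exp ((Complex.I * (t : ℂ)) • Lρ) * F B *
          NormedSpace.exp ((-(Complex.I * (t : ℂ))) • Lρ)) := by
  let H : Matrix (Fin n) (Fin n) ℂ →ₗ[ℂ] Matrix (Fin m) (Fin m) ℂ :=
    LinearMap.mulRight ℂ v ∘ₗ LinearMap.mulLeft ℂ (star v) ∘ₗ F ∘ₗ
      LinearMap.mulRight ℂ (star u) ∘ₗ LinearMap.mulLeft ℂ u
  have hH : ∀ C, H C = star v * F (u * C * star u) * v := by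
    intro C
    simp only [H, LinearMap.comp_apply, LinearMap.mulRight_apply, LinearMap.mulLeft_apply]
  have hcore := stmt7_core H d e hd he
  have bridge1 : (∀ B : Matrix (Fin n) (Fin n) ℂ, F (σ * B) * ρ = ρ * F (B * σ)) ↔
      (∀ C, H (diagonal (fun a => ((d a : ℝ) : ℂ)) * C) * diagonal (fun p => ((e p : ℝ) : ℂ))
        = diagonal (fun p => ((e p : ℝ) : ℂ)) * H (C * diagonal (fun a => ((d a : ℝ) : ℂ)))) := by
    constructor
    · intro h C
      have hX1 : σ * (u * C * star u)
          = u * (diagonal (fun a => ((d a : ℝ) : ℂ)) * C) * star u := by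
        rw [hσspec]; exact stmt7_conj_mul_mul u (star u) hu1 _ _
      have hX2 : (u * C * star u) * σ
          = u * (C * diagonal (fun a => ((d a : ℝ) : ℂ))) * star u := by
        rw [hσspec]; exact stmt7_conj_mul_mul u (star u) hu1 _ _
      rw [hH, hH, ← hX1, ← hX2]
      calc star v * F (σ * (u * C * star u)) * v * diagonal (fun p => ((e p : ℝ) : ℂ))
          = star v * (F (σ * (u * C * star u)) *
              (v * diagonal (fun p => ((e p : ℝ) : ℂ)) * star v)) * v :=
            stmt7_conj_mul_right v (star v) hv1 _ _
        _ = star v * (F (σ * (u * C * star u)) * ρ) * v := by rw [← hρspec]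
        _ = star v * (ρ * F ((u * C * star u) * σ)) * v := by rw [h]
        _ = star v * ((v * diagonal (fun p => ((e p : ℝ) : ℂ)) * star v) *
              F ((u * C * star u) * σ)) * v := by rw [← hρspec]
        _ = diagonal (fun p => ((e p : ℝ) : ℂ)) * (star v * F ((u * C * star u) * σ) * v) :=
            (stmt7_conj_mul_left v (star v) hv1 _ _).symm
    · intro h B
      have hB : u * (star u * B * u) * star u = B := stmt7_conj_conj (star u) u hu2 B
      have hσB : σ * B
          = u * (diagonal (fun a => ((d a : ℝ) : ℂ)) * (star u * B * u)) * star u := by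
        conv_lhs => rw [← hB, hσspec]
        exact stmt7_conj_mul_mul u (star u) hu1 _ _
      have hBσ : B * σ
          = u * ((star u * B * u) * diagonal (fun a => ((d a : ℝ) : ℂ))) * star u := by
        conv_lhs => rw [← hB, hσspec]
        exact stmt7_conj_mul_mul u (star u) hu1 _ _
      refine stmt7_conj_inj v (star v) hv1 hv2 ?_
      calc star v * (F (σ * B) * ρ) * v
          = (star v * F (σ * B) * v) * diagonal (fun p => ((e p : ℝ) : ℂ)) := by
            rw [hρspec]; exact (stmt7_conj_mul_right v (star v) hv1 _ _).symm
        _ = H (diagonal (fun a => ((d a : ℝ) : ℂ)) * (star u * B * u)) *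
              diagonal (fun p => ((e p : ℝ) : ℂ)) := by rw [hH, ← hσB]
        _ = diagonal (fun p => ((e p : ℝ) : ℂ)) *
              H ((star u * B * u) * diagonal (fun a => ((d a : ℝ) : ℂ))) := h (star u * B * u)
        _ = diagonal (fun p => ((e p : ℝ) : ℂ)) * (star v * F (B * σ) * v) := by
            rw [hH, ← hBσ]
        _ = star v * (ρ * F (B * σ)) * v := by
            rw [hρspec]; exact stmt7_conj_mul_left v (star v) hv1 _ _
  have bridge2 : (∀ (B : Matrix (Fin n) (Fin n) ℂ) (t : ℝ),
      F (NormedSpace.exp ((Complex.I * (t : ℂ)) • Lσ) * B *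
         NormedSpace.exp ((-(Complex.I * (t : ℂ))) • Lσ))
        = NormedSpace.exp ((Complex.I * (t : ℂ)) • Lρ) * F B *
          NormedSpace.exp ((-(Complex.I * (t : ℂ))) • Lρ)) ↔
      (∀ (C : Matrix (Fin n) (Fin n) ℂ) (t : ℝ),
        H (diagonal (fun a => Complex.exp (Complex.I * (t : ℂ) * (Real.log (d a) : ℂ))) * C *
           diagonal (fun a => Complex.exp (-(Complex.I * (t : ℂ)) * (Real.log (d a) : ℂ))))
          = diagonal (fun p => Complex.exp (Complex.I * (t : ℂ) * (Real.log (e p) : ℂ))) * H C *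
            diagonal (fun p => Complex.exp (-(Complex.I * (t : ℂ)) * (Real.log (e p) : ℂ)))) := by
    constructor
    · intro h C t
      have h1 := h (u * C * star u) t
      rw [hexpσ (Complex.I * (t : ℂ)), hexpσ (-(Complex.I * (t : ℂ))),
        hexpρ (Complex.I * (t : ℂ)), hexpρ (-(Complex.I * (t : ℂ)))] at h1
      rw [stmt7_conj_mul_mul u (star u) hu1, stmt7_conj_mul_mul u (star u) hu1] at h1
      rw [hH, hH, h1]
      exact stmt7_conj_both v (star v) hv1 _ _ _
    · intro h B t
      rw [hexpσ (Complex.I * (t : ℂ)), hexpσ (-(Complex.I * (t : ℂ))),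
        hexpρ (Complex.I * (t : ℂ)), hexpρ (-(Complex.I * (t : ℂ)))]
      have hB : u * (star u * B * u) * star u = B := stmt7_conj_conj (star u) u hu2 B
      have hargs : (u * diagonal (fun a => Complex.exp (Complex.I * (t : ℂ) *
            (Real.log (d a) : ℂ))) * star u) * B *
            (u * diagonal (fun a => Complex.exp (-(Complex.I * (t : ℂ)) *
            (Real.log (d a) : ℂ))) * star u)
          = u * (diagonal (fun a => Complex.exp (Complex.I * (t : ℂ) * (Real.log (d a) : ℂ))) *
              (star u * B * u) *
              diagonal (fun a => Complex.exp (-(Complex.I * (t : ℂ)) * (Real.log (d a) : ℂ)))) *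
              star u := by
        conv_lhs => rw [← hB]
        rw [stmt7_conj_mul_mul u (star u) hu1, stmt7_conj_mul_mul u (star u) hu1]
      refine stmt7_conj_inj v (star v) hv1 hv2 ?_
      have h1 := h (star u * B * u) t
      calc star v * (F ((u * diagonal (fun a => Complex.exp (Complex.I * (t : ℂ) *
              (Real.log (d a) : ℂ))) * star u) * B *
              (u * diagonal (fun a => Complex.exp (-(Complex.I * (t : ℂ)) *
              (Real.log (d a) : ℂ))) * star u))) * v
          = H (diagonal (fun a => Complex.exp (Complex.I * (t : ℂ) * (Real.log (d a) : ℂ))) *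
              (star u * B * u) *
              diagonal (fun a => Complex.exp (-(Complex.I * (t : ℂ)) * (Real.log (d a) : ℂ)))) := by
            rw [hargs, hH]
        _ = diagonal (fun p => Complex.exp (Complex.I * (t : ℂ) * (Real.log (e p) : ℂ))) *
              H (star u * B * u) *
              diagonal (fun p => Complex.exp (-(Complex.I * (t : ℂ)) * (Real.log (e p) : ℂ))) := h1
        _ = diagonal (fun p => Complex.exp (Complex.I * (t : ℂ) * (Real.log (e p) : ℂ))) *
              (star v * F B * v) *
              diagonal (fun p => Complex.exp (-(Complex.I * (t : ℂ)) * (Real.log (e p) : ℂ))) := by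
            rw [hH, hB]
        _ = star v * ((v * diagonal (fun p => Complex.exp (Complex.I * (t : ℂ) *
              (Real.log (e p) : ℂ))) * star v) * F B *
              (v * diagonal (fun p => Complex.exp (-(Complex.I * (t : ℂ)) *
              (Real.log (e p) : ℂ))) * star v)) * v :=
            (stmt7_conj_both v (star v) hv1 _ _ _).symm
  exact bridge1.trans (hcore.trans bridge2.symm)

/-- For a state-preserving UCP map `F : M_n(ℂ) → M_m(ℂ)` between positive
definite density matrices `σ` and `ρ`, `F(σB)ρ = ρF(Bσ)` for all `B` iff `F` intertwines
the modular groups: `F(σ^{it} B σ^{-it}) = ρ^{it} F(B) ρ^{-it}` for all `B`, `t`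
(the Accardi–Cecchini condition), where `ρ^{it} = exp(i t · log ρ)` with `log` defined
via the functional calculus for Hermitian matrices. -/
theorem stmt_7 (n m : ℕ)
    (F : Matrix (Fin n) (Fin n) ℂ →ₗ[ℂ] Matrix (Fin m) (Fin m) ℂ)
    (hFcp : IsCP (⇑F)) (hFunital : F 1 = 1)
    (σ : Matrix (Fin n) (Fin n) ℂ) (hσ : σ.PosDef) (hσtr : σ.trace = 1)
    (ρ : Matrix (Fin m) (Fin m) ℂ) (hρ : ρ.PosDef) (hρtr : ρ.trace = 1)
    (hpres : ∀ B : Matrix (Fin n) (Fin n) ℂ, (ρ * F B).trace = (σ * B).trace) :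
    (∀ B : Matrix (Fin n) (Fin n) ℂ, F (σ * B) * ρ = ρ * F (B * σ)) ↔
    (∀ (B : Matrix (Fin n) (Fin n) ℂ) (t : ℝ),
      F (NormedSpace.exp ((Complex.I * (t : ℂ)) • (hσ.isHermitian.cfc Real.log)) * B *
         NormedSpace.exp ((-(Complex.I * (t : ℂ))) • (hσ.isHermitian.cfc Real.log)))
        = NormedSpace.exp ((Complex.I * (t : ℂ)) • (hρ.isHermitian.cfc Real.log)) * F B *
          NormedSpace.exp ((-(Complex.I * (t : ℂ))) • (hρ.isHermitian.cfc Real.log))) := by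
  refine stmt7_main F σ ρ (hσ.isHermitian.cfc Real.log) (hρ.isHermitian.cfc Real.log)
    (hσ.isHermitian.eigenvectorUnitary : Matrix (Fin n) (Fin n) ℂ)
    (hρ.isHermitian.eigenvectorUnitary : Matrix (Fin m) (Fin m) ℂ)
    hσ.isHermitian.eigenvalues hρ.isHermitian.eigenvalues
    (Matrix.mem_unitaryGroup_iff'.mp hσ.isHermitian.eigenvectorUnitary.2)
    (Matrix.mem_unitaryGroup_iff.mp hσ.isHermitian.eigenvectorUnitary.2)
    (Matrix.mem_unitaryGroup_iff'.mp hρ.isHermitian.eigenvectorUnitary.2)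
    (Matrix.mem_unitaryGroup_iff.mp hρ.isHermitian.eigenvectorUnitary.2)
    (fun a => hσ.eigenvalues_pos a) (fun p => hρ.eigenvalues_pos p)
    ?_ ?_ (fun c => stmt7_exp_cfc hσ.isHermitian c) (fun c => stmt7_exp_cfc hρ.isHermitian c)
  · conv_lhs => rw [hσ.isHermitian.spectral_theorem]
    rfl
  · conv_lhs => rw [hρ.isHermitian.spectral_theorem]
    rfl
end

section
/- Let F : M_n(ℂ) → M_m(ℂ) be a UCP map, and let σ ∈ M_n(ℂ), ρ ∈ M_m(ℂ) be positive definite density matrices with tr(ρF(B)) = tr(σB) for all B ∈ M_n(ℂ). Then the following are equivalent: (a) there exists a UCP map G : M_m(ℂ) → M_n(ℂ) such that tr(σ·G(A)·B) = tr(ρ·A·F(B)) for all A ∈ M_m(ℂ) and B ∈ M_n(ℂ) (a Bayesian inverse of (F, ω)); (b) F(σB)ρ = ρF(Bσ) for all B ∈ M_n(ℂ). Moreover, when a Bayesian inverse exists it is unique: any two maps G, G' : M_m(ℂ) → M_n(ℂ) satisfying the condition in (a) are equal. -/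
open Matrix ComplexOrder

namespace Stmt8Aux

variable {p q : Type*} [Fintype p] [Fintype q] [DecidableEq p] [DecidableEq q]

lemma trace_mul_stdBasis (X : Matrix p p ℂ) (i j : p) (c : ℂ) :
    (X * Matrix.single i j c).trace = X j i * c := by
  classical
  rw [Matrix.trace]
  rw [Finset.sum_eq_single j]
  · simp
  · intro b _ hb
    exact Matrix.mul_single_apply_of_ne (c := c) i j b b hb X
  · simp

lemma ext_of_trace (X Y : Matrix p p ℂ)
    (h : ∀ B : Matrix p p ℂ, (X * B).trace = (Y * B).trace) : X = Y := by
  ext i j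
  have := h (Matrix.single j i 1)
  rwa [trace_mul_stdBasis, trace_mul_stdBasis, mul_one, mul_one] at this

/-- The trace dual of a linear map between matrix algebras. -/
noncomputable def dual (F : Matrix p p ℂ →ₗ[ℂ] Matrix q q ℂ) :
    Matrix q q ℂ →ₗ[ℂ] Matrix p p ℂ where
  toFun X := Matrix.of fun i j => (X * F (Matrix.single j i 1)).trace
  map_add' X Y := by ext i j; simp [Matrix.add_mul]
  map_smul' c X := by ext i j; simp [Matrix.smul_mul]

lemma dual_spec (F : Matrix p p ℂ →ₗ[ℂ] Matrix q q ℂ) (X : Matrix q q ℂ) (B : Matrix p p ℂ) :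
    (dual F X * B).trace = (X * F B).trace := by
  induction B using Matrix.induction_on' with
  | h_zero => simp
  | h_add B C hB hC => simp [Matrix.mul_add, hB, hC]
  | h_std_basis i j c =>
      rw [trace_mul_stdBasis]
      have : Matrix.single i j c = c • Matrix.single i j (1 : ℂ) := by simp
      rw [this, _root_.map_smul, Matrix.mul_smul, Matrix.trace_smul]
      rw [dual]
      simp only [LinearMap.coe_mk, AddHom.coe_mk, Matrix.of_apply]
      rw [smul_eq_mul]; ring

variable {p q : Type*} [Fintype p] [Fintype q] [DecidableEq p] [DecidableEq q]

lemma trace_nonneg_of_psd (A : Matrix p p ℂ) (hA : A.PosSemidef) : 0 ≤ A.trace := by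
  rw [Matrix.trace]
  refine Finset.sum_nonneg fun i _ => ?_
  have := hA.dotProduct_mulVec_nonneg (Pi.single i 1)
  simpa [Matrix.mulVec_single, Matrix.diag, dotProduct, Pi.single_apply, apply_ite] using this

open scoped MatrixOrder in
lemma trace_mul_psd_nonneg (A B : Matrix p p ℂ) (hA : A.PosSemidef) (hB : B.PosSemidef) :
    0 ≤ (A * B).trace := by
  obtain ⟨C, rfl⟩ := CStarAlgebra.nonneg_iff_eq_star_mul_self.mp hA.nonneg
  rw [Matrix.mul_assoc, Matrix.trace_mul_comm]
  exact trace_nonneg_of_psd _ (hB.mul_mul_conjTranspose_same C)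

lemma trace_mul_vecMulVec (N : Matrix p p ℂ) (y : p → ℂ) :
    (N * Matrix.vecMulVec y (star y)).trace = star y ⬝ᵥ N *ᵥ y := by
  simp only [Matrix.trace, Matrix.diag, Matrix.mul_apply, Matrix.vecMulVec_apply,
    dotProduct, Matrix.mulVec, Pi.star_apply]
  refine Finset.sum_congr rfl fun a _ => ?_
  rw [Finset.mul_sum]
  refine Finset.sum_congr rfl fun b _ => ?_
  ring

lemma vecMulVec_psd (y : p → ℂ) : (Matrix.vecMulVec y (star y)).PosSemidef := by
  have : Matrix.vecMulVec y (star y) =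
      (Matrix.of fun (_ : Fin 1) j => star (y j))ᴴ * (Matrix.of fun (_ : Fin 1) j => star (y j)) := by
    ext i j
    simp [Matrix.mul_apply, Matrix.vecMulVec_apply, Matrix.conjTranspose_apply]
  rw [this]
  exact Matrix.posSemidef_conjTranspose_mul_self _

variable {p q : Type*} [Fintype p] [Fintype q] [DecidableEq p] [DecidableEq q]

lemma herm_of_cp (Φ : Matrix p p ℂ → Matrix q q ℂ) (hcp : IsCP Φ) (X : Matrix p p ℂ) :
    Φ Xᴴ = (Φ X)ᴴ := by
  classical
  set C : Matrix p (Fin 2 × p) ℂ :=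
    Matrix.of (fun r u => if u.1 = 0 then (if r = u.2 then 1 else 0) else X r u.2) with hC
  have hM : (Cᴴ * C).PosSemidef := Matrix.posSemidef_conjTranspose_mul_self C
  have h := (hcp 2 (Cᴴ * C) hM).1
  have h01 : (Matrix.of fun a b => (Cᴴ * C) ((0:Fin 2), a) ((1:Fin 2), b)) = X := by
    ext a b
    simp [Matrix.mul_apply, Matrix.conjTranspose_apply, hC, apply_ite (starRingEnd ℂ)]
  have h10 : (Matrix.of fun a b => (Cᴴ * C) ((1:Fin 2), a) ((0:Fin 2), b)) = Xᴴ := by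
    ext a b
    simp [Matrix.mul_apply, Matrix.conjTranspose_apply, hC, apply_ite (starRingEnd ℂ)]
  ext i j
  have e : (amplify Φ 2 (Cᴴ * C))ᴴ ((1,i)) ((0,j)) = amplify Φ 2 (Cᴴ * C) ((1,i)) ((0,j)) := by
    rw [h]
  simp only [Matrix.conjTranspose_apply, amplify, Matrix.of_apply] at e
  rw [h01, h10] at e
  rw [Matrix.conjTranspose_apply]
  exact e.symm

lemma amplify_herm (Φ : Matrix p p ℂ → Matrix q q ℂ) (hherm : ∀ X, Φ Xᴴ = (Φ X)ᴴ) (k : ℕ)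
    (M : Matrix (Fin k × p) (Fin k × p) ℂ) : amplify Φ k Mᴴ = (amplify Φ k M)ᴴ := by
  ext u v
  have hblk : (Matrix.of fun a b => Mᴴ (u.1, a) (v.1, b)) =
      (Matrix.of fun a b => M (v.1, a) (u.1, b))ᴴ := by
    ext a b; simp [Matrix.conjTranspose_apply]
  show Φ (Matrix.of fun a b => Mᴴ (u.1, a) (v.1, b)) u.2 v.2 = _
  rw [hblk, hherm]
  rfl

lemma dual_herm (F : Matrix p p ℂ →ₗ[ℂ] Matrix q q ℂ) (hherm : ∀ X, F Xᴴ = (F X)ᴴ)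
    (Y : Matrix q q ℂ) : dual F Yᴴ = (dual F Y)ᴴ := by
  apply ext_of_trace
  intro B
  rw [dual_spec]
  calc (Yᴴ * F B).trace
      = star (((F B)ᴴ * Y).trace) := by
        rw [← Matrix.trace_conjTranspose, Matrix.conjTranspose_mul,
          Matrix.conjTranspose_conjTranspose]
    _ = star ((Y * F Bᴴ).trace) := by rw [Matrix.trace_mul_comm, ← hherm]
    _ = star ((dual F Y * Bᴴ).trace) := by rw [dual_spec]
    _ = ((dual F Y * Bᴴ)ᴴ).trace := (Matrix.trace_conjTranspose _).symm
    _ = ((dual F Y)ᴴ * B).trace := by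
        rw [Matrix.conjTranspose_mul, Matrix.conjTranspose_conjTranspose,
          Matrix.trace_mul_comm]

lemma amplify_dual_trace (F : Matrix p p ℂ →ₗ[ℂ] Matrix q q ℂ) (k : ℕ)
    (X : Matrix (Fin k × q) (Fin k × q) ℂ) (M : Matrix (Fin k × p) (Fin k × p) ℂ) :
    (amplify (⇑(dual F)) k X * M).trace = (X * amplify (⇑F) k M).trace := by
  have h : ∀ a b : Fin k,
      (dual F (Matrix.of fun i j => X (a,i) (b,j)) * (Matrix.of fun i j => M (b,i) (a,j))).trace
      = ((Matrix.of fun i j => X (a,i) (b,j)) * F (Matrix.of fun i j => M (b,i) (a,j))).trace :=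
    fun a b => dual_spec F _ _
  calc (amplify (⇑(dual F)) k X * M).trace
      = ∑ a : Fin k, ∑ b : Fin k,
          (dual F (Matrix.of fun i j => X (a,i) (b,j)) * (Matrix.of fun i j => M (b,i) (a,j))).trace := by
        simp only [Matrix.trace, Matrix.diag, Matrix.mul_apply, amplify, Matrix.of_apply,
          Fintype.sum_prod_type]
        exact Finset.sum_congr rfl fun a _ => Finset.sum_comm
    _ = ∑ a : Fin k, ∑ b : Fin k,
          ((Matrix.of fun i j => X (a,i) (b,j)) * F (Matrix.of fun i j => M (b,i) (a,j))).trace := by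
        exact Finset.sum_congr rfl fun a _ => Finset.sum_congr rfl fun b _ => h a b
    _ = (X * amplify (⇑F) k M).trace := by
        simp only [Matrix.trace, Matrix.diag, Matrix.mul_apply, amplify, Matrix.of_apply,
          Fintype.sum_prod_type]
        exact (Finset.sum_congr rfl fun a _ => Finset.sum_comm).symm

lemma dual_isCP (F : Matrix p p ℂ →ₗ[ℂ] Matrix q q ℂ) (hF : IsCP (⇑F)) : IsCP (⇑(dual F)) := by
  intro k X hX
  have hFherm : ∀ Y, F Yᴴ = (F Y)ᴴ := herm_of_cp (⇑F) hF
  rw [Matrix.posSemidef_iff_dotProduct_mulVec]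
  constructor
  · have := amplify_herm (⇑(dual F)) (dual_herm F hFherm) k X
    rw [Matrix.IsHermitian, ← this, hX.1.eq]
  · intro y
    have e1 : star y ⬝ᵥ (amplify (⇑(dual F)) k X) *ᵥ y
        = ((amplify (⇑(dual F)) k X) * Matrix.vecMulVec y (star y)).trace :=
      (trace_mul_vecMulVec _ y).symm
    rw [e1, amplify_dual_trace]
    exact trace_mul_psd_nonneg _ _ hX (hF k _ (vecMulVec_psd y))

variable {p q : Type*} [Fintype p] [Fintype q] [DecidableEq p] [DecidableEq q]

lemma diag_mul_stdBasis (v : p → ℂ) (i j : p) (c : ℂ) :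
    Matrix.diagonal v * Matrix.single i j c = Matrix.single i j (v i * c) := by
  ext a b
  rw [Matrix.diagonal_mul]
  by_cases h : i = a ∧ j = b
  · obtain ⟨rfl, rfl⟩ := h; simp
  · rw [Matrix.single_apply_of_ne _ _ _ _ _ h,
      Matrix.single_apply_of_ne _ _ _ _ _ h, mul_zero]

lemma stdBasis_mul_diag (v : p → ℂ) (i j : p) (c : ℂ) :
    Matrix.single i j c * Matrix.diagonal v = Matrix.single i j (v j * c) := by
  ext a b
  rw [Matrix.mul_diagonal]
  by_cases h : i = a ∧ j = b
  · obtain ⟨rfl, rfl⟩ := h; simp [mul_comm]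
  · rw [Matrix.single_apply_of_ne _ _ _ _ _ h,
      Matrix.single_apply_of_ne _ _ _ _ _ h, zero_mul]

lemma sqrt_step (x : ℂ) (di dj ea eb : ℝ) (hdi : 0 ≤ di) (hdj : 0 ≤ dj)
    (h : (di : ℂ) * (x * (eb : ℂ)) = (dj : ℂ) * ((ea : ℂ) * x)) :
    (Real.sqrt di : ℂ) * (x * (Real.sqrt eb : ℂ))
      = (Real.sqrt dj : ℂ) * ((Real.sqrt ea : ℂ) * x) := by
  rcases eq_or_ne x 0 with rfl | hx
  · simp
  · have h1 : ((di * eb : ℝ) : ℂ) = ((dj * ea : ℝ) : ℂ) := by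
      push_cast
      have h' : (di : ℂ) * eb * x = (dj : ℂ) * ea * x := by linear_combination h
      exact mul_right_cancel₀ hx h'
    have h2 : Real.sqrt (di * eb) = Real.sqrt (dj * ea) := by
      rw [Complex.ofReal_inj.mp h1]
    rw [Real.sqrt_mul hdi, Real.sqrt_mul hdj] at h2
    have h3 : ((Real.sqrt di * Real.sqrt eb : ℝ) : ℂ) = ((Real.sqrt dj * Real.sqrt ea : ℝ) : ℂ) := by
      exact_mod_cast congrArg Complex.ofReal h2
    push_cast at h3
    linear_combination x * h3

variable {p q : Type*} [Fintype p] [Fintype q] [DecidableEq p] [DecidableEq q]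

lemma half_diag (Φ : Matrix p p ℂ →ₗ[ℂ] Matrix q q ℂ)
    (d : p → ℝ) (e : q → ℝ) (hd : ∀ i, 0 ≤ d i)
    (h : ∀ A : Matrix p p ℂ,
      Φ (Matrix.diagonal (fun i => (d i : ℂ)) * A) * Matrix.diagonal (fun a => (e a : ℂ))
        = Matrix.diagonal (fun a => (e a : ℂ)) * Φ (A * Matrix.diagonal (fun i => (d i : ℂ))))
    (A : Matrix p p ℂ) :
    Φ (Matrix.diagonal (fun i => (Real.sqrt (d i) : ℂ)) * A)
        * Matrix.diagonal (fun a => (Real.sqrt (e a) : ℂ))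
      = Matrix.diagonal (fun a => (Real.sqrt (e a) : ℂ))
        * Φ (A * Matrix.diagonal (fun i => (Real.sqrt (d i) : ℂ))) := by
  induction A using Matrix.induction_on' with
  | h_zero => simp
  | h_add B C hB hC => rw [Matrix.mul_add, Matrix.add_mul, map_add, map_add,
      Matrix.add_mul, Matrix.mul_add, hB, hC]
  | h_std_basis i j c =>
    have key := h (Matrix.single i j c)
    rw [diag_mul_stdBasis, stdBasis_mul_diag] at key
    rw [diag_mul_stdBasis, stdBasis_mul_diag]
    have e1 : ∀ (x : ℂ), Matrix.single i j (x * c) = x • Matrix.single i j c := by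
      intro x; simp
    rw [e1, e1, _root_.map_smul, _root_.map_smul, Matrix.smul_mul, Matrix.mul_smul] at key
    rw [e1, e1, _root_.map_smul, _root_.map_smul, Matrix.smul_mul, Matrix.mul_smul]
    set X := Φ (Matrix.single i j c) with hX
    ext a b
    have keyab := congrFun (congrFun key a) b
    simp only [Matrix.smul_apply, Matrix.mul_diagonal, Matrix.diagonal_mul,
      smul_eq_mul] at keyab ⊢
    exact sqrt_step (X a b) (d i) (d j) (e a) (e b) (hd i) (hd j) keyab

variable {p q : Type*} [Fintype p] [Fintype q] [DecidableEq p] [DecidableEq q]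

lemma conj_diag_herm (V : Matrix q q ℂ) (f : q → ℝ) :
    (V * Matrix.diagonal (fun a => (f a : ℂ)) * star V).IsHermitian := by
  have hst : (star fun a => ((f a : ℂ))) = fun a => ((f a : ℂ)) := by
    funext a
    simp only [Pi.star_apply, Complex.star_def, Complex.conj_ofReal]
  have hd : (Matrix.diagonal (fun a => (f a : ℂ))).IsHermitian := by
    rw [Matrix.IsHermitian, Matrix.diagonal_conjTranspose, hst]
  have h2 := Matrix.isHermitian_mul_mul_conjTranspose V hd
  rwa [Matrix.star_eq_conjTranspose]

lemma half_intertwine (Φ : Matrix p p ℂ →ₗ[ℂ] Matrix q q ℂ)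
    (ρ : Matrix p p ℂ) (hρ : ρ.PosDef) (σ : Matrix q q ℂ) (hσ : σ.PosDef)
    (h : ∀ A, Φ (ρ * A) * σ = σ * Φ (A * ρ)) :
    ∃ (Sρ : Matrix p p ℂ) (Sσ Tσ : Matrix q q ℂ),
      Sρ.IsHermitian ∧ Sσ.IsHermitian ∧ Tσ.IsHermitian ∧
      Sρ * Sρ = ρ ∧ Sσ * Sσ = σ ∧ Tσ * Sσ = 1 ∧ Sσ * Tσ = 1 ∧
      ∀ A, Φ (Sρ * A) * Sσ = Sσ * Φ (A * Sρ) := by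
  classical
  set U : Matrix p p ℂ := (hρ.1.eigenvectorUnitary : Matrix p p ℂ) with hU
  set d : p → ℝ := hρ.1.eigenvalues with hd
  set V : Matrix q q ℂ := (hσ.1.eigenvectorUnitary : Matrix q q ℂ) with hV
  set e : q → ℝ := hσ.1.eigenvalues with he
  have hU1 : U * star U = 1 := Matrix.mem_unitaryGroup_iff.mp hρ.1.eigenvectorUnitary.2
  have hU2 : star U * U = 1 := Matrix.mem_unitaryGroup_iff'.mp hρ.1.eigenvectorUnitary.2
  have hV1 : V * star V = 1 := Matrix.mem_unitaryGroup_iff.mp hσ.1.eigenvectorUnitary.2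
  have hV2 : star V * V = 1 := Matrix.mem_unitaryGroup_iff'.mp hσ.1.eigenvectorUnitary.2
  have hdpos : ∀ i, 0 < d i := fun i => hρ.eigenvalues_pos i
  have hepos : ∀ a, 0 < e a := fun a => hσ.eigenvalues_pos a
  have hspecρ : ρ = U * Matrix.diagonal (fun i => (d i : ℂ)) * star U := by
    have := hρ.1.spectral_theorem
    rw [Unitary.conjStarAlgAut_apply] at this
    exact this
  have hspecσ : σ = V * Matrix.diagonal (fun a => (e a : ℂ)) * star V := by
    have := hσ.1.spectral_theorem
    rw [Unitary.conjStarAlgAut_apply] at this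
    exact this
  have cU : ∀ X : Matrix p p ℂ, star U * (U * X) = X := fun X => by
    rw [← Matrix.mul_assoc, hU2, Matrix.one_mul]
  have cU' : ∀ X : Matrix p p ℂ, U * (star U * X) = X := fun X => by
    rw [← Matrix.mul_assoc, hU1, Matrix.one_mul]
  have cV : ∀ X : Matrix q q ℂ, star V * (V * X) = X := fun X => by
    rw [← Matrix.mul_assoc, hV2, Matrix.one_mul]
  have cV' : ∀ X : Matrix q q ℂ, V * (star V * X) = X := fun X => by
    rw [← Matrix.mul_assoc, hV1, Matrix.one_mul]
  set Ψ : Matrix p p ℂ →ₗ[ℂ] Matrix q q ℂ :=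
    { toFun := fun A => star V * Φ (U * A * star U) * V
      map_add' := fun A B => by
        simp only [Matrix.mul_add, Matrix.add_mul, map_add]
      map_smul' := fun c A => by
        simp only [Matrix.mul_smul, Matrix.smul_mul, _root_.map_smul, RingHom.id_apply] } with hΨ
  have hΨdef : ∀ A, Ψ A = star V * Φ (U * A * star U) * V := fun A => rfl
  have hΨmod : ∀ A, Ψ (Matrix.diagonal (fun i => (d i : ℂ)) * A)
        * Matrix.diagonal (fun a => (e a : ℂ))
      = Matrix.diagonal (fun a => (e a : ℂ))
        * Ψ (A * Matrix.diagonal (fun i => (d i : ℂ))) := by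
    intro A
    have e1 : U * (Matrix.diagonal (fun i => (d i : ℂ)) * A) * star U
        = ρ * (U * A * star U) := by
      rw [hspecρ]; simp only [Matrix.mul_assoc, cU]
    have e2 : U * (A * Matrix.diagonal (fun i => (d i : ℂ))) * star U
        = (U * A * star U) * ρ := by
      rw [hspecρ]; simp only [Matrix.mul_assoc, cU, hU1, Matrix.mul_one]
    have e3 : V * Matrix.diagonal (fun a => (e a : ℂ)) = σ * V := by
      rw [hspecσ]; simp only [Matrix.mul_assoc, hV2, Matrix.mul_one]
    have e4 : star V * σ = Matrix.diagonal (fun a => (e a : ℂ)) * star V := by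
      rw [hspecσ]; simp only [Matrix.mul_assoc, cV]
    rw [hΨdef, hΨdef, e1, e2]
    calc star V * Φ (ρ * (U * A * star U)) * V * Matrix.diagonal (fun a => (e a : ℂ))
        = star V * (Φ (ρ * (U * A * star U)) * (V * Matrix.diagonal (fun a => (e a : ℂ)))) := by
          simp only [Matrix.mul_assoc]
      _ = star V * (Φ (ρ * (U * A * star U)) * σ) * V := by
          rw [e3]; simp only [Matrix.mul_assoc]
      _ = star V * (σ * Φ ((U * A * star U) * ρ)) * V := by rw [h]
      _ = Matrix.diagonal (fun a => (e a : ℂ)) * (star V * Φ ((U * A * star U) * ρ) * V) := by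
          rw [← Matrix.mul_assoc (star V) σ, e4]; simp only [Matrix.mul_assoc]
  have hhalf := half_diag Ψ d e (fun i => (hdpos i).le) hΨmod
  refine ⟨U * Matrix.diagonal (fun i => (Real.sqrt (d i) : ℂ)) * star U,
    V * Matrix.diagonal (fun a => (Real.sqrt (e a) : ℂ)) * star V,
    V * Matrix.diagonal (fun a => (((Real.sqrt (e a))⁻¹ : ℝ) : ℂ)) * star V,
    conj_diag_herm U _, conj_diag_herm V _,
    conj_diag_herm V (fun a => (Real.sqrt (e a))⁻¹), ?_, ?_, ?_, ?_, ?_⟩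
  · calc (U * Matrix.diagonal (fun i => (Real.sqrt (d i) : ℂ)) * star U)
          * (U * Matrix.diagonal (fun i => (Real.sqrt (d i) : ℂ)) * star U)
        = U * (Matrix.diagonal (fun i => (Real.sqrt (d i) : ℂ))
            * (Matrix.diagonal (fun i => (Real.sqrt (d i) : ℂ)) * star U)) := by
          simp only [Matrix.mul_assoc, cU]
      _ = ρ := by
          rw [← Matrix.mul_assoc (Matrix.diagonal _), Matrix.diagonal_mul_diagonal]
          have h1 : (fun i => (Real.sqrt (d i) : ℂ) * (Real.sqrt (d i) : ℂ))
              = fun i => ((d i : ℝ) : ℂ) := by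
            funext i
            rw [← Complex.ofReal_mul, Real.mul_self_sqrt (hdpos i).le]
          rw [h1, hspecρ, ← Matrix.mul_assoc]
  · calc (V * Matrix.diagonal (fun a => (Real.sqrt (e a) : ℂ)) * star V)
          * (V * Matrix.diagonal (fun a => (Real.sqrt (e a) : ℂ)) * star V)
        = V * (Matrix.diagonal (fun a => (Real.sqrt (e a) : ℂ))
            * (Matrix.diagonal (fun a => (Real.sqrt (e a) : ℂ)) * star V)) := by
          simp only [Matrix.mul_assoc, cV]
      _ = σ := by
          rw [← Matrix.mul_assoc (Matrix.diagonal _), Matrix.diagonal_mul_diagonal]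
          have h1 : (fun a => (Real.sqrt (e a) : ℂ) * (Real.sqrt (e a) : ℂ))
              = fun a => ((e a : ℝ) : ℂ) := by
            funext a
            rw [← Complex.ofReal_mul, Real.mul_self_sqrt (hepos a).le]
          rw [h1, hspecσ, ← Matrix.mul_assoc]
  · calc (V * Matrix.diagonal (fun a => (((Real.sqrt (e a))⁻¹ : ℝ) : ℂ)) * star V)
          * (V * Matrix.diagonal (fun a => (Real.sqrt (e a) : ℂ)) * star V)
        = V * (Matrix.diagonal (fun a => (((Real.sqrt (e a))⁻¹ : ℝ) : ℂ))
            * (Matrix.diagonal (fun a => (Real.sqrt (e a) : ℂ)) * star V)) := by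
          simp only [Matrix.mul_assoc, cV]
      _ = 1 := by
          rw [← Matrix.mul_assoc (Matrix.diagonal _), Matrix.diagonal_mul_diagonal]
          have h1 : (fun a => (((Real.sqrt (e a))⁻¹ : ℝ) : ℂ) * (Real.sqrt (e a) : ℂ))
              = fun _ : q => (1:ℂ) := by
            funext a
            rw [← Complex.ofReal_mul, inv_mul_cancel₀ (Real.sqrt_pos.mpr (hepos a)).ne',
              Complex.ofReal_one]
          rw [h1, Matrix.diagonal_one, Matrix.one_mul, hV1]
  · calc (V * Matrix.diagonal (fun a => (Real.sqrt (e a) : ℂ)) * star V)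
          * (V * Matrix.diagonal (fun a => (((Real.sqrt (e a))⁻¹ : ℝ) : ℂ)) * star V)
        = V * (Matrix.diagonal (fun a => (Real.sqrt (e a) : ℂ))
            * (Matrix.diagonal (fun a => (((Real.sqrt (e a))⁻¹ : ℝ) : ℂ)) * star V)) := by
          simp only [Matrix.mul_assoc, cV]
      _ = 1 := by
          rw [← Matrix.mul_assoc (Matrix.diagonal _), Matrix.diagonal_mul_diagonal]
          have h1 : (fun a => (Real.sqrt (e a) : ℂ) * (((Real.sqrt (e a))⁻¹ : ℝ) : ℂ))
              = fun _ : q => (1:ℂ) := by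
            funext a
            rw [← Complex.ofReal_mul, mul_inv_cancel₀ (Real.sqrt_pos.mpr (hepos a)).ne',
              Complex.ofReal_one]
          rw [h1, Matrix.diagonal_one, Matrix.one_mul, hV1]
  · intro A
    have key := hhalf (star U * A * U)
    rw [hΨdef, hΨdef] at key
    have k1 : U * (Matrix.diagonal (fun i => (Real.sqrt (d i) : ℂ)) * (star U * A * U)) * star U
        = (U * Matrix.diagonal (fun i => (Real.sqrt (d i) : ℂ)) * star U) * A := by
      simp only [Matrix.mul_assoc, hU1, Matrix.mul_one]
    have k2 : U * ((star U * A * U) * Matrix.diagonal (fun i => (Real.sqrt (d i) : ℂ))) * star U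
        = A * (U * Matrix.diagonal (fun i => (Real.sqrt (d i) : ℂ)) * star U) := by
      simp only [Matrix.mul_assoc, cU']
    rw [k1, k2] at key
    have key2 := congrArg (fun Z => V * Z * star V) key
    have k3 : V * (star V
          * Φ ((U * Matrix.diagonal (fun i => (Real.sqrt (d i) : ℂ)) * star U) * A) * V
          * Matrix.diagonal (fun a => (Real.sqrt (e a) : ℂ))) * star V
        = Φ ((U * Matrix.diagonal (fun i => (Real.sqrt (d i) : ℂ)) * star U) * A)
          * (V * Matrix.diagonal (fun a => (Real.sqrt (e a) : ℂ)) * star V) := by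
      simp only [Matrix.mul_assoc, cV']
    have k4 : V * (Matrix.diagonal (fun a => (Real.sqrt (e a) : ℂ))
          * (star V * Φ (A * (U * Matrix.diagonal (fun i => (Real.sqrt (d i) : ℂ)) * star U)) * V))
          * star V
        = (V * Matrix.diagonal (fun a => (Real.sqrt (e a) : ℂ)) * star V)
          * Φ (A * (U * Matrix.diagonal (fun i => (Real.sqrt (d i) : ℂ)) * star U)) := by
      simp only [Matrix.mul_assoc, hV1, Matrix.mul_one]
    rw [k3, k4] at key2
    exact key2

variable {p q : Type*} [Fintype p] [Fintype q] [DecidableEq p] [DecidableEq q]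

def oneKron (k : ℕ) (C : Matrix p p ℂ) : Matrix (Fin k × p) (Fin k × p) ℂ :=
  Matrix.of fun u v => if u.1 = v.1 then C u.2 v.2 else 0

lemma oneKron_conjTranspose (k : ℕ) (C : Matrix p p ℂ) :
    (oneKron k C)ᴴ = oneKron k Cᴴ := by
  ext u v
  simp only [Matrix.conjTranspose_apply, oneKron, Matrix.of_apply]
  by_cases h : v.1 = u.1
  · rw [if_pos h, if_pos h.symm]
  · rw [if_neg h, if_neg (fun hh => h hh.symm), star_zero]

lemma oneKron_mul (k : ℕ) (C : Matrix p p ℂ) (N : Matrix (Fin k × p) (Fin k × p) ℂ)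
    (a : Fin k) (i : p) (v : Fin k × p) :
    (oneKron k C * N) (a, i) v = ∑ s, C i s * N (a, s) v := by
  rw [Matrix.mul_apply, Fintype.sum_prod_type]
  rw [Finset.sum_eq_single a]
  · refine Finset.sum_congr rfl fun s _ => ?_
    congr 1
    show (if a = a then C i s else 0) = C i s
    rw [if_pos rfl]
  · intro b _ hb
    refine Finset.sum_eq_zero fun s _ => ?_
    have h0 : oneKron k C (a, i) (b, s) = 0 := by
      show (if a = b then C i s else 0) = 0
      exact if_neg fun h => hb h.symm
    rw [h0, zero_mul]
  · intro h
    exact absurd (Finset.mem_univ a) h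

lemma mul_oneKron (k : ℕ) (C : Matrix p p ℂ) (N : Matrix (Fin k × p) (Fin k × p) ℂ)
    (u : Fin k × p) (b : Fin k) (j : p) :
    (N * oneKron k C) u (b, j) = ∑ s, N u (b, s) * C s j := by
  rw [Matrix.mul_apply, Fintype.sum_prod_type]
  rw [Finset.sum_eq_single b]
  · refine Finset.sum_congr rfl fun s _ => ?_
    congr 1
    show (if b = b then C s j else 0) = C s j
    rw [if_pos rfl]
  · intro c _ hc
    refine Finset.sum_eq_zero fun s _ => ?_
    have h0 : oneKron k C (c, s) (b, j) = 0 := by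
      show (if c = b then C s j else 0) = 0
      exact if_neg hc
    rw [h0, mul_zero]
  · intro h
    exact absurd (Finset.mem_univ b) h

lemma block_conj (k : ℕ) (Sρ : Matrix p p ℂ) (M : Matrix (Fin k × p) (Fin k × p) ℂ)
    (a b : Fin k) :
    (Matrix.of fun s t => (oneKron k Sρ * M * oneKron k Sρ) (a,s) (b,t))
      = Sρ * (Matrix.of fun s t => M (a,s) (b,t)) * Sρ := by
  ext s t
  rw [Matrix.of_apply, mul_oneKron, Matrix.mul_apply]
  refine Finset.sum_congr rfl fun x _ => ?_
  congr 1
  rw [oneKron_mul, Matrix.mul_apply]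
  refine Finset.sum_congr rfl fun y _ => ?_
  rfl

lemma amplify_conj (Φ : Matrix p p ℂ →ₗ[ℂ] Matrix q q ℂ) (Sρ : Matrix p p ℂ)
    (Tσ : Matrix q q ℂ) (k : ℕ) (M : Matrix (Fin k × p) (Fin k × p) ℂ) :
    amplify (fun A => Tσ * Φ (Sρ * A * Sρ) * Tσ) k M
      = oneKron k Tσ * amplify (⇑Φ) k (oneKron k Sρ * M * oneKron k Sρ) * oneKron k Tσ := by
  ext u v
  obtain ⟨a, i⟩ := u
  obtain ⟨b, j⟩ := v
  show (Tσ * Φ (Sρ * (Matrix.of fun s t => M (a,s) (b,t)) * Sρ) * Tσ) i j = _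
  rw [mul_oneKron, Matrix.mul_apply]
  refine Finset.sum_congr rfl fun t _ => ?_
  congr 1
  rw [oneKron_mul, Matrix.mul_apply]
  refine Finset.sum_congr rfl fun s _ => ?_
  congr 1
  show Φ (Sρ * (Matrix.of fun s t => M (a,s) (b,t)) * Sρ) s t
      = Φ (Matrix.of fun x y => (oneKron k Sρ * M * oneKron k Sρ) (a,x) (b,y)) s t
  rw [block_conj]

end Stmt8Aux

open Stmt8Aux

/-- For a state-preserving UCP map `F : M_n(ℂ) → M_m(ℂ)` between positive
definite density matrices `σ` and `ρ`: a UCP Bayesian inverse of `(F, tr(ρ ·))` exists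
iff `F(σB)ρ = ρF(Bσ)` for all `B`; moreover any two Bayesian inverses are equal. -/
theorem stmt_8 (n m : ℕ)
    (F : Matrix (Fin n) (Fin n) ℂ →ₗ[ℂ] Matrix (Fin m) (Fin m) ℂ)
    (hFcp : IsCP (⇑F)) (hFunital : F 1 = 1)
    (σ : Matrix (Fin n) (Fin n) ℂ) (hσ : σ.PosDef) (hσtr : σ.trace = 1)
    (ρ : Matrix (Fin m) (Fin m) ℂ) (hρ : ρ.PosDef) (hρtr : ρ.trace = 1)
    (hpres : ∀ B : Matrix (Fin n) (Fin n) ℂ, (ρ * F B).trace = (σ * B).trace) :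
    ((∃ G : Matrix (Fin m) (Fin m) ℂ →ₗ[ℂ] Matrix (Fin n) (Fin n) ℂ,
        IsCP (⇑G) ∧ G 1 = 1 ∧
        ∀ (A : Matrix (Fin m) (Fin m) ℂ) (B : Matrix (Fin n) (Fin n) ℂ),
          (σ * G A * B).trace = (ρ * A * F B).trace) ↔
      (∀ B : Matrix (Fin n) (Fin n) ℂ, F (σ * B) * ρ = ρ * F (B * σ))) ∧
    (∀ G G' : Matrix (Fin m) (Fin m) ℂ →ₗ[ℂ] Matrix (Fin n) (Fin n) ℂ,
      (IsCP (⇑G) ∧ G 1 = 1 ∧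
        ∀ (A : Matrix (Fin m) (Fin m) ℂ) (B : Matrix (Fin n) (Fin n) ℂ),
          (σ * G A * B).trace = (ρ * A * F B).trace) →
      (IsCP (⇑G') ∧ G' 1 = 1 ∧
        ∀ (A : Matrix (Fin m) (Fin m) ℂ) (B : Matrix (Fin n) (Fin n) ℂ),
          (σ * G' A * B).trace = (ρ * A * F B).trace) →
      G = G') := by
  classical
  have hFherm : ∀ X, F Xᴴ = (F X)ᴴ := herm_of_cp (⇑F) hFcp
  constructor
  · constructor
    · -- existence → commutation
      rintro ⟨G, hGcp, hGu, hG⟩ B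
      have hGherm : ∀ X, G Xᴴ = (G X)ᴴ := herm_of_cp (⇑G) hGcp
      have hG2 : ∀ (A : Matrix (Fin m) (Fin m) ℂ) (B' : Matrix (Fin n) (Fin n) ℂ),
          (G A * σ * B').trace = (ρ * F B' * A).trace := by
        intro A B'
        have h0 := hG Aᴴ B'ᴴ
        have e1 : (σ * G Aᴴ * B'ᴴ)ᴴ = B' * (G A * σ) := by
          rw [Matrix.conjTranspose_mul, Matrix.conjTranspose_mul,
            Matrix.conjTranspose_conjTranspose, hσ.1.eq, ← hGherm,
            Matrix.conjTranspose_conjTranspose]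
        have e2 : (ρ * Aᴴ * F B'ᴴ)ᴴ = F B' * (A * ρ) := by
          rw [Matrix.conjTranspose_mul, Matrix.conjTranspose_mul,
            Matrix.conjTranspose_conjTranspose, hρ.1.eq, ← hFherm,
            Matrix.conjTranspose_conjTranspose]
        calc (G A * σ * B').trace
            = (B' * (G A * σ)).trace := by
              rw [Matrix.trace_mul_comm]
          _ = ((σ * G Aᴴ * B'ᴴ)ᴴ).trace := by rw [e1]
          _ = star ((σ * G Aᴴ * B'ᴴ).trace) := Matrix.trace_conjTranspose _
          _ = star ((ρ * Aᴴ * F B'ᴴ).trace) := by rw [h0]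
          _ = ((ρ * Aᴴ * F B'ᴴ)ᴴ).trace := (Matrix.trace_conjTranspose _).symm
          _ = (F B' * (A * ρ)).trace := by rw [e2]
          _ = (ρ * F B' * A).trace := by
              rw [← Matrix.mul_assoc, Matrix.trace_mul_cycle]
      apply ext_of_trace
      intro A
      calc (F (σ * B) * ρ * A).trace
          = (ρ * A * F (σ * B)).trace := by
            rw [Matrix.trace_mul_cycle, Matrix.trace_mul_cycle]
        _ = (σ * G A * (σ * B)).trace := (hG A (σ * B)).symm
        _ = (σ * G A * σ * B).trace := congrArg Matrix.trace (by simp only [Matrix.mul_assoc])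
        _ = (G A * σ * (B * σ)).trace := by
            rw [show σ * G A * σ * B = σ * (G A * σ * B) by simp only [Matrix.mul_assoc],
              Matrix.trace_mul_comm]
            exact congrArg Matrix.trace (by simp only [Matrix.mul_assoc])
        _ = (ρ * F (B * σ) * A).trace := hG2 A (B * σ)
    · -- commutation → existence
      intro hb
      set Φ := dual F with hΦ
      have hΦρ : Φ ρ = σ := by
        apply ext_of_trace
        intro B
        rw [dual_spec, hpres]
      have hbdual : ∀ A, Φ (ρ * A) * σ = σ * Φ (A * ρ) := by
        intro A
        apply ext_of_trace
        intro B
        calc (Φ (ρ * A) * σ * B).trace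
            = (Φ (ρ * A) * (σ * B)).trace := by rw [Matrix.mul_assoc]
          _ = (ρ * A * F (σ * B)).trace := dual_spec F _ _
          _ = (A * (F (σ * B) * ρ)).trace := by
              rw [Matrix.trace_mul_cycle, Matrix.trace_mul_comm]
          _ = (A * (ρ * F (B * σ))).trace := by rw [hb]
          _ = (A * ρ * F (B * σ)).trace := by rw [← Matrix.mul_assoc]
          _ = (Φ (A * ρ) * (B * σ)).trace := (dual_spec F _ _).symm
          _ = (σ * Φ (A * ρ) * B).trace := by
              rw [← Matrix.mul_assoc, Matrix.trace_mul_cycle]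
      obtain ⟨Sρ, Sσ, Tσ, hSρh, hSσh, hTσh, hSρ2, hSσ2, hTS, hST, hhalf⟩ :=
        half_intertwine Φ ρ hρ σ hσ hbdual
      set G : Matrix (Fin m) (Fin m) ℂ →ₗ[ℂ] Matrix (Fin n) (Fin n) ℂ :=
        { toFun := fun A => Tσ * Φ (Sρ * A * Sρ) * Tσ
          map_add' := fun A B => by
            simp only [Matrix.mul_add, Matrix.add_mul, map_add]
          map_smul' := fun c A => by
            simp only [Matrix.mul_smul, Matrix.smul_mul, _root_.map_smul,
              RingHom.id_apply] } with hG
      have hGfun : ⇑G = fun A => Tσ * Φ (Sρ * A * Sρ) * Tσ := rfl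
      have hGdef : ∀ A, G A = Tσ * Φ (Sρ * A * Sρ) * Tσ := fun A => rfl
      have hσG : ∀ A, σ * G A = Φ (ρ * A) := by
        intro A
        have k1 : Sσ * Φ (Sρ * A * Sρ) = Φ (ρ * A) * Sσ := by
          have hh := hhalf (Sρ * A)
          rw [← Matrix.mul_assoc] at hh
          rw [← hh, hSρ2]
        calc σ * G A = Sσ * Sσ * (Tσ * Φ (Sρ * A * Sρ) * Tσ) := by rw [hGdef, hSσ2]
          _ = Sσ * ((Sσ * Tσ) * (Φ (Sρ * A * Sρ) * Tσ)) := by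
              simp only [Matrix.mul_assoc]
          _ = Sσ * Φ (Sρ * A * Sρ) * Tσ := by
              rw [hST, Matrix.one_mul, ← Matrix.mul_assoc]
          _ = Φ (ρ * A) * Sσ * Tσ := by rw [k1]
          _ = Φ (ρ * A) := by rw [Matrix.mul_assoc, hST, Matrix.mul_one]
      refine ⟨G, ?_, ?_, ?_⟩
      · -- CP
        intro k M hM
        rw [hGfun, amplify_conj]
        have hK : (oneKron k Sρ)ᴴ = oneKron k Sρ := by
          rw [oneKron_conjTranspose, hSρh.eq]
        have hKT : (oneKron k Tσ)ᴴ = oneKron k Tσ := by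
          rw [oneKron_conjTranspose, hTσh.eq]
        have h1 : (oneKron k Sρ * M * oneKron k Sρ).PosSemidef := by
          have := hM.conjTranspose_mul_mul_same (oneKron k Sρ)
          rwa [hK] at this
        have h2 := (dual_isCP F hFcp) k _ h1
        have h3 := h2.mul_mul_conjTranspose_same (oneKron k Tσ)
        rwa [hKT] at h3
      · -- unital
        rw [hGdef, Matrix.mul_one, hSρ2, hΦρ, ← hSσ2, ← Matrix.mul_assoc, hTS,
          Matrix.one_mul, hST]
      · intro A B
        rw [hσG, dual_spec]
  · -- uniqueness
    rintro G G' ⟨-, -, hG⟩ ⟨-, -, hG'⟩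
    apply LinearMap.ext
    intro A
    have h1 : σ * G A = σ * G' A := by
      apply ext_of_trace
      intro B
      exact (hG A B).trans (hG' A B).symm
    letI := hσ.isUnit.invertible
    have := congrArg (fun Z => σ⁻¹ * Z) h1
    simpa [← Matrix.mul_assoc, Matrix.inv_mul_of_invertible] using this
end
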